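/- arXiv:2212.03910 — 4 statements merged into one kernel-verified Lean document; each statement's English description precedes it below -/
import Mathlib

section
/- Let n ≥ 1 and p ∈ (1, ∞). Let f : ℝⁿ → ℝ be Lipschitz with compact support. Then the limit as t → 0⁺ of t^(−p/2) ∬_{ℝⁿ×ℝⁿ} p_t(x,y) |f(x) − f(y)|^p dx dy exists and equals (2^p/√π) · Γ((p+1)/2) · ∫_{ℝⁿ} ‖Df(x)‖^p dx, where Γ is Euler's gamma function and Df(x) is the Fréchet derivative of f at x (which exists for Lebesgue-a.e. x by Rademacher's theorem; at points of non-differentiability the integrand uses the convention Df(x) = 0). -/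
open MeasureTheory Real Filter

/-- The Gaussian heat kernel on `ℝⁿ`. -/
noncomputable def heatKernel (n : ℕ) (t : ℝ) (x y : EuclideanSpace ℝ (Fin n)) : ℝ :=
  (4 * Real.pi * t) ^ (-(n : ℝ) / 2) * Real.exp (-‖x - y‖ ^ 2 / (4 * t))

section Aux

lemma continuous_abs_rpow (p : ℝ) (hp : 0 < p) : Continuous fun a : ℝ => |a| ^ p := by
  apply continuous_abs.rpow_const
  intro x
  right; exact hp.le

lemma moment1d (p : ℝ) (hp : 0 < p) :
    ∫ s : ℝ, |s| ^ p * rexp (-s ^ 2 / 4) = 2 ^ (p + 1) * Real.Gamma ((p + 1) / 2) := by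
  have h2 : ∀ s : ℝ, |s| ^ (2:ℝ) = s ^ 2 := fun s => by
    rw [show (2:ℝ) = ((2:ℕ):ℝ) by norm_num, Real.rpow_natCast, sq_abs]
  have h1 : ∀ s : ℝ, |s| ^ p * rexp (-s ^ 2 / 4)
      = (fun x : ℝ => x ^ p * rexp (-(1/4) * x ^ (2:ℝ))) |s| := by
    intro s
    simp only [h2]
    ring_nf
  calc ∫ s : ℝ, |s| ^ p * rexp (-s ^ 2 / 4)
      = ∫ s : ℝ, (fun x : ℝ => x ^ p * rexp (-(1/4) * x ^ (2:ℝ))) |s| := by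
        simp_rw [h1]
    _ = 2 * ∫ s in Set.Ioi (0:ℝ), s ^ p * rexp (-(1/4) * s ^ (2:ℝ)) :=
        integral_comp_abs (f := fun x => x ^ p * rexp (-(1/4) * x ^ (2:ℝ)))
    _ = 2 ^ (p + 1) * Real.Gamma ((p + 1) / 2) := by
        rw [integral_rpow_mul_exp_neg_mul_rpow two_pos (by linarith) (by norm_num)]
        rw [show ((1:ℝ)/4) = (2:ℝ)^(-2 : ℝ) by
          rw [Real.rpow_neg two_pos.le]
          norm_num [show ((2:ℝ)^(2:ℝ)) = 4 by
            rw [show (2:ℝ) = ((2:ℕ):ℝ) by norm_num, Real.rpow_natCast]; norm_num]]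
        rw [← Real.rpow_mul two_pos.le]
        have : (-2 : ℝ) * (-(p + 1) / 2) = p + 1 := by ring
        rw [this]
        ring

lemma gauss1d : ∫ s : ℝ, rexp (-s ^ 2 / 4) = Real.sqrt (4 * π) := by
  have := integral_gaussian (1/4)
  simp_rw [show ∀ x : ℝ, -(1/4) * x ^ 2 = -x^2/4 by intro x; ring] at this
  rw [this]
  rw [show π / (1/4) = 4 * π by ring]

lemma momentE (n : ℕ) (i₀ : Fin n) (p : ℝ) (hp : 0 < p) :
    ∫ z : EuclideanSpace ℝ (Fin n),
      (4 * π) ^ (-(n : ℝ) / 2) * rexp (-‖z‖ ^ 2 / 4) * |z i₀| ^ p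
      = 2 ^ p * Real.Gamma ((p + 1) / 2) / Real.sqrt π := by
  have h4π : (0:ℝ) < 4 * π := by positivity
  set g : Fin n → ℝ → ℝ :=
    fun i s => (4 * π) ^ (-(1:ℝ)/2) * rexp (-s ^ 2 / 4) * (if i = i₀ then |s| ^ p else 1) with hg
  have key : ∀ w : Fin n → ℝ,
      (4 * π) ^ (-(n : ℝ) / 2) * rexp (-(∑ i, (w i) ^ 2) / 4) * |w i₀| ^ p
        = ∏ i, g i (w i) := by
    intro w
    rw [hg]
    simp only [Finset.prod_mul_distrib]
    rw [Finset.prod_const, Finset.card_univ, Fintype.card_fin]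
    rw [← Real.exp_sum, Finset.prod_ite_eq' Finset.univ i₀ (fun i => |w i| ^ p)]
    simp only [Finset.mem_univ, if_true]
    congr 1
    · congr 1
      · rw [← Real.rpow_natCast ((4 * π) ^ (-(1:ℝ)/2)) n, ← Real.rpow_mul h4π.le]
        congr 1
        ring
      · congr 1
        rw [← Finset.sum_div, ← Finset.sum_neg_distrib]
  calc ∫ z : EuclideanSpace ℝ (Fin n),
        (4 * π) ^ (-(n : ℝ) / 2) * rexp (-‖z‖ ^ 2 / 4) * |z i₀| ^ p
      = ∫ w : Fin n → ℝ, (4 * π) ^ (-(n : ℝ) / 2) *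
          rexp (-‖(MeasurableEquiv.toLp 2 (Fin n → ℝ)) w‖ ^ 2 / 4) *
          |((MeasurableEquiv.toLp 2 (Fin n → ℝ)) w) i₀| ^ p := by
        exact ((MeasurePreserving.symm _
            (EuclideanSpace.volume_preserving_symm_measurableEquiv_toLp (Fin n))).integral_comp
          (MeasurableEquiv.measurableEmbedding _) _).symm
    _ = ∫ w : Fin n → ℝ, ∏ i, g i (w i) := by
        congr 1
        ext w
        rw [← key w]
        have hnorm : ‖(MeasurableEquiv.toLp 2 (Fin n → ℝ)) w‖ ^ 2 = ∑ i, (w i) ^ 2 := by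
          rw [EuclideanSpace.norm_eq]
          rw [Real.sq_sqrt (by positivity)]
          simp [MeasurableEquiv.toLp, Real.norm_eq_abs, sq_abs]
          rfl
        have hcoord : ((MeasurableEquiv.toLp 2 (Fin n → ℝ)) w) i₀ = w i₀ := by
          rfl
        rw [hnorm, hcoord]
    _ = ∏ i, ∫ s : ℝ, g i s := by
        exact integral_fintype_prod_eq_prod (E := fun _ => ℝ) g
    _ = 2 ^ p * Real.Gamma ((p + 1) / 2) / Real.sqrt π := by
        have hval : ∀ i, (∫ s : ℝ, g i s)
            = if i = i₀ then (4 * π) ^ (-(1:ℝ)/2) * (2 ^ (p+1) * Real.Gamma ((p + 1) / 2)) else 1 := by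
          intro i
          by_cases hi : i = i₀
          · simp only [hg, hi, if_true]
            rw [show (fun s : ℝ => (4 * π) ^ (-(1:ℝ)/2) * rexp (-s ^ 2 / 4) * |s| ^ p)
              = (fun s : ℝ => (4 * π) ^ (-(1:ℝ)/2) * (|s| ^ p * rexp (-s ^ 2 / 4))) by
                ext s; ring]
            rw [integral_const_mul, moment1d p hp]
          · simp only [hg, hi, if_false, mul_one]
            rw [integral_const_mul, gauss1d]
            rw [show ((4:ℝ) * π) ^ ((-1:ℝ)/2) = (Real.sqrt (4 * π))⁻¹ by
              rw [show ((-1:ℝ)/2) = -(1/2) by norm_num, Real.rpow_neg h4π.le,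
                ← Real.sqrt_eq_rpow]]
            rw [inv_mul_cancel₀ (by positivity)]
        simp_rw [hval]
        rw [Finset.prod_ite_eq' Finset.univ i₀
          (fun _ => (4 * π) ^ (-(1:ℝ)/2) * (2 ^ (p+1) * Real.Gamma ((p + 1) / 2)))]
        simp only [Finset.mem_univ, if_true]
        rw [show ((4:ℝ) * π) ^ ((-1:ℝ)/2) = (Real.sqrt (4 * π))⁻¹ by
          rw [show ((-1:ℝ)/2) = -(1/2) by norm_num, Real.rpow_neg h4π.le,
            ← Real.sqrt_eq_rpow]]
        rw [show Real.sqrt (4 * π) = 2 * Real.sqrt π by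
          rw [show (4:ℝ) * π = 2^2 * π by norm_num, Real.sqrt_mul (by positivity),
            Real.sqrt_sq two_pos.le]]
        rw [Real.rpow_add two_pos, Real.rpow_one]
        have hπ : Real.sqrt π ≠ 0 := by positivity
        field_simp

lemma momentCLM (n : ℕ) (hn : 1 ≤ n) (p : ℝ) (hp : 0 < p)
    (L : EuclideanSpace ℝ (Fin n) →L[ℝ] ℝ) :
    ∫ z : EuclideanSpace ℝ (Fin n),
      (4 * π) ^ (-(n : ℝ) / 2) * rexp (-‖z‖ ^ 2 / 4) * |L z| ^ p
      = (2 ^ p / Real.sqrt π) * Real.Gamma ((p + 1) / 2) * ‖L‖ ^ p := by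
  set E := EuclideanSpace ℝ (Fin n)
  set v : E := (InnerProductSpace.toDual ℝ E).symm L with hv
  have hLz : ∀ z : E, L z = inner ℝ v z := fun z =>
    (InnerProductSpace.toDual_symm_apply (𝕜 := ℝ) (E := E)).symm
  have hnv : ‖v‖ = ‖L‖ := LinearIsometryEquiv.norm_map _ L
  by_cases hv0 : v = 0
  · have hL0 : ∀ z : E, L z = 0 := fun z => by rw [hLz z, hv0, inner_zero_left]
    have hLn : ‖L‖ = 0 := by rw [← hnv, hv0, norm_zero]
    simp only [hL0, hLn, abs_zero, Real.zero_rpow hp.ne', mul_zero, integral_zero]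
  · -- main case
    have hnv0 : (0:ℝ) < ‖v‖ := norm_pos_iff.2 hv0
    set i₀ : Fin n := ⟨0, hn⟩
    set e₀ : E := EuclideanSpace.single i₀ (1:ℝ) with he₀
    have hne₀ : ‖e₀‖ = 1 := by rw [he₀, EuclideanSpace.norm_single]; norm_num
    set u : E := ‖v‖⁻¹ • v with hu
    have hnu : ‖u‖ = 1 := by
      rw [hu, norm_smul, norm_inv, norm_norm, inv_mul_cancel₀ hnv0.ne']
    set Q : E ≃ₗᵢ[ℝ] E := Submodule.reflection (ℝ ∙ (u - e₀))ᗮ with hQ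
    have hQu : Q u = e₀ := Submodule.reflection_sub (by rw [hnu, hne₀])
    have hMP : MeasurePreserving Q := Q.measurePreserving
    have hinner : ∀ w : E, inner ℝ v (Q w) = ‖v‖ * w i₀ := by
      intro w
      have h1 : v = ‖v‖ • u := by rw [hu, smul_smul, mul_inv_cancel₀ hnv0.ne', one_smul]
      conv_lhs => rw [h1, real_inner_smul_left]
      congr 1
      have h2 : inner ℝ u (Q w) = inner ℝ (Q u) (Q (Q w)) :=
        (Q.inner_map_map u (Q w)).symm
      rw [h2, hQu, show Q (Q w) = w from Submodule.reflection_reflection _ w]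
      rw [he₀, EuclideanSpace.inner_single_left]
      simp
    calc ∫ z : E, (4 * π) ^ (-(n : ℝ) / 2) * rexp (-‖z‖ ^ 2 / 4) * |L z| ^ p
        = ∫ w : E, (4 * π) ^ (-(n : ℝ) / 2) * rexp (-‖Q w‖ ^ 2 / 4) * |L (Q w)| ^ p :=
          (hMP.integral_comp Q.toHomeomorph.measurableEmbedding _).symm
      _ = ∫ w : E, ‖v‖ ^ p * ((4 * π) ^ (-(n : ℝ) / 2) * rexp (-‖w‖ ^ 2 / 4) * |w i₀| ^ p) := by
          congr 1; ext w
          rw [hLz, hinner w, Q.norm_map]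
          rw [abs_mul, abs_of_nonneg hnv0.le, Real.mul_rpow (norm_nonneg v) (abs_nonneg _)]
          ring
      _ = (2 ^ p / Real.sqrt π) * Real.Gamma ((p + 1) / 2) * ‖L‖ ^ p := by
          rw [integral_const_mul, momentE n i₀ p hp, hnv]
          ring

lemma dirLimit {n : ℕ} {f : EuclideanSpace ℝ (Fin n) → ℝ}
    {x : EuclideanSpace ℝ (Fin n)} (hx : DifferentiableAt ℝ f x)
    (z : EuclideanSpace ℝ (Fin n)) :
    Tendsto (fun t : ℝ => (f (x + Real.sqrt t • z) - f x) / Real.sqrt t)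
      (nhdsWithin 0 (Set.Ioi 0)) (nhds (fderiv ℝ f x z)) := by
  have hL : HasDerivAt (fun s : ℝ => f (x + s • z)) (fderiv ℝ f x z) 0 :=
    hx.hasFDerivAt.hasLineDerivAt z
  have hslope : Tendsto (slope (fun s : ℝ => f (x + s • z)) 0)
      (nhdsWithin 0 {(0:ℝ)}ᶜ) (nhds (fderiv ℝ f x z)) :=
    hasDerivAt_iff_tendsto_slope.1 hL
  have hsqrt : Tendsto (fun t : ℝ => Real.sqrt t) (nhdsWithin 0 (Set.Ioi 0))
      (nhdsWithin 0 {(0:ℝ)}ᶜ) := by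
    apply tendsto_nhdsWithin_of_tendsto_nhds_of_eventually_within
    · have : Tendsto Real.sqrt (nhds 0) (nhds 0) := by
        simpa using Real.continuous_sqrt.tendsto 0
      exact this.mono_left nhdsWithin_le_nhds
    · filter_upwards [self_mem_nhdsWithin] with t ht
      simp only [Set.mem_compl_iff, Set.mem_singleton_iff]
      exact (Real.sqrt_pos.2 ht).ne'
  have := hslope.comp hsqrt
  convert this using 1
  ext t
  simp only [Function.comp_apply, slope_def_field, div_eq_mul_inv]
  rw [zero_smul, add_zero, sub_zero]

lemma bound_aux (n : ℕ) (C R p : ℝ) (hC0 : 0 ≤ C) (hR : 0 ≤ R) (hp : 0 < p)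
    (x z : EuclideanSpace ℝ (Fin n)) (val : ℝ)
    (hval : |val| ≤ C * ‖z‖) (hsup : val ≠ 0 → ‖x‖ ≤ R + ‖z‖) :
    (4 * π) ^ (-(n : ℝ) / 2) * rexp (-‖z‖ ^ 2 / 4) * |val| ^ p
      ≤ ((4 * π) ^ (-(n : ℝ) / 2) * C ^ p * rexp (4 * p ^ 2 + R ^ 2 / 8)) *
        (rexp (-‖x‖ ^ 2 / 16) * rexp (-‖z‖ ^ 2 / 16)) := by
  have hc : (0:ℝ) < (4 * π) ^ (-(n : ℝ) / 2) := Real.rpow_pos_of_pos (by positivity) _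
  by_cases h0 : val = 0
  · rw [h0, abs_zero, Real.zero_rpow hp.ne', mul_zero]
    positivity
  · have hxz := hsup h0
    -- |val| ^ p ≤ C^p * ‖z‖^p
    have h1 : |val| ^ p ≤ C ^ p * ‖z‖ ^ p := by
      rw [← Real.mul_rpow hC0 (norm_nonneg z)]
      exact Real.rpow_le_rpow (abs_nonneg _) hval hp.le
    -- ‖z‖^p ≤ exp (4p² + ‖z‖²/16)
    have h2 : ‖z‖ ^ p ≤ rexp (4 * p ^ 2 + ‖z‖ ^ 2 / 16) := by
      have hz1 : ‖z‖ ≤ rexp ‖z‖ := (Real.add_one_le_exp ‖z‖).trans' (by linarith [norm_nonneg z])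
      have hz2 : ‖z‖ ^ p ≤ (rexp ‖z‖) ^ p :=
        Real.rpow_le_rpow (norm_nonneg z) hz1 hp.le
      have hz3 : (rexp ‖z‖) ^ p = rexp (‖z‖ * p) := (Real.exp_mul ‖z‖ p).symm
      refine hz2.trans ?_
      rw [hz3]
      apply Real.exp_le_exp.2
      nlinarith [sq_nonneg (‖z‖ / 4 - 2 * p)]
    calc (4 * π) ^ (-(n : ℝ) / 2) * rexp (-‖z‖ ^ 2 / 4) * |val| ^ p
        ≤ (4 * π) ^ (-(n : ℝ) / 2) * rexp (-‖z‖ ^ 2 / 4) *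
            (C ^ p * rexp (4 * p ^ 2 + ‖z‖ ^ 2 / 16)) := by
          apply mul_le_mul_of_nonneg_left _ (by positivity)
          exact h1.trans (mul_le_mul_of_nonneg_left h2 (Real.rpow_nonneg hC0 p))
      _ = ((4 * π) ^ (-(n : ℝ) / 2) * C ^ p) *
            rexp (-‖z‖ ^ 2 / 4 + (4 * p ^ 2 + ‖z‖ ^ 2 / 16)) := by
          simp only [Real.exp_add]; ring
      _ ≤ ((4 * π) ^ (-(n : ℝ) / 2) * C ^ p) *
            rexp ((4 * p ^ 2 + R ^ 2 / 8) + (-‖x‖ ^ 2 / 16 + -‖z‖ ^ 2 / 16)) := by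
          apply mul_le_mul_of_nonneg_left _ (by positivity)
          apply Real.exp_le_exp.2
          have hx2 : ‖x‖ ^ 2 ≤ (R + ‖z‖) ^ 2 := pow_le_pow_left₀ (norm_nonneg x) hxz 2
          nlinarith [hx2, sq_nonneg (R - ‖z‖)]
      _ = ((4 * π) ^ (-(n : ℝ) / 2) * C ^ p * rexp (4 * p ^ 2 + R ^ 2 / 8)) *
            (rexp (-‖x‖ ^ 2 / 16) * rexp (-‖z‖ ^ 2 / 16)) := by
          simp only [Real.exp_add]; ring

lemma integrable_gauss16 (n : ℕ) :
    Integrable (fun x : EuclideanSpace ℝ (Fin n) => rexp (-‖x‖ ^ 2 / 16)) := by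
  have h := (GaussianFourier.integrable_cexp_neg_mul_sq_norm_add
    (V := EuclideanSpace ℝ (Fin n)) (b := (1/16 : ℂ)) (by norm_num) 0 0).norm
  refine h.congr (Filter.Eventually.of_forall fun x => ?_)
  simp only [Complex.ofReal_zero, zero_mul, mul_zero, add_zero]
  rw [Complex.norm_exp]
  congr 1
  simp [Complex.mul_re, ← Complex.ofReal_pow]
  ring

lemma step1 (n : ℕ) (p : ℝ) (hp : 0 < p) (f : EuclideanSpace ℝ (Fin n) → ℝ)
    (t : ℝ) (ht : 0 < t) :
    t ^ (-(p / 2)) * ∫ x, ∫ y, heatKernel n t x y * |f x - f y| ^ p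
      = ∫ x, ∫ z, (4 * π) ^ (-(n : ℝ) / 2) * rexp (-‖z‖ ^ 2 / 4) *
          |(f (x + Real.sqrt t • z) - f x) / Real.sqrt t| ^ p := by
  have hst : (0:ℝ) < Real.sqrt t := Real.sqrt_pos.2 ht
  have h4π : (0:ℝ) < 4 * π := by positivity
  rw [← integral_const_mul]
  congr 1
  ext x
  have hT : ∀ F : EuclideanSpace ℝ (Fin n) → ℝ, ∫ y, F y = ∫ w, F (x + w) :=
    fun F => (integral_add_left_eq_self F x).symm
  rw [hT (fun y => heatKernel n t x y * |f x - f y| ^ p)]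
  have hS : ∫ w, heatKernel n t x (x + w) * |f x - f (x + w)| ^ p
      = (Real.sqrt t) ^ n • ∫ z, heatKernel n t x (x + Real.sqrt t • z) *
          |f x - f (x + Real.sqrt t • z)| ^ p := by
    have := MeasureTheory.Measure.integral_comp_smul_of_nonneg (μ := volume)
      (fun w => heatKernel n t x (x + w) * |f x - f (x + w)| ^ p) (Real.sqrt t)
      (hR := Real.sqrt_nonneg t)
    rw [finrank_euclideanSpace_fin] at this
    rw [this, smul_smul, mul_inv_cancel₀ (by positivity), one_smul]
  rw [hS, smul_eq_mul, ← integral_const_mul, ← integral_const_mul]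
  congr 1
  ext z
  -- pointwise algebra
  have hns : ‖x - (x + Real.sqrt t • z)‖ ^ 2 = t * ‖z‖ ^ 2 := by
    rw [show x - (x + Real.sqrt t • z) = -(Real.sqrt t • z) by abel]
    rw [norm_neg, norm_smul, Real.norm_eq_abs, abs_of_nonneg (Real.sqrt_nonneg t)]
    rw [mul_pow, Real.sq_sqrt ht.le]
  have hk : heatKernel n t x (x + Real.sqrt t • z)
      = (4 * π) ^ (-(n : ℝ) / 2) * t ^ (-(n : ℝ) / 2) * rexp (-‖z‖ ^ 2 / 4) := by
    rw [heatKernel, hns]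
    congr 1
    · rw [show (4 : ℝ) * π * t = (4 * π) * t by ring,
        Real.mul_rpow h4π.le ht.le]
    · congr 1
      field_simp
  have hsn : (Real.sqrt t) ^ n = t ^ ((n : ℝ) / 2) := by
    rw [Real.sqrt_eq_rpow, ← Real.rpow_natCast (t ^ ((1:ℝ)/2)) n, ← Real.rpow_mul ht.le]
    congr 1
    ring
  have hsp : |(f (x + Real.sqrt t • z) - f x) / Real.sqrt t| ^ p
      = |f x - f (x + Real.sqrt t • z)| ^ p * (t ^ (p / 2))⁻¹ := by
    rw [abs_div, abs_of_nonneg (Real.sqrt_nonneg t), abs_sub_comm,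
      Real.div_rpow (abs_nonneg _) (Real.sqrt_nonneg t), div_eq_mul_inv]
    congr 2
    rw [Real.sqrt_eq_rpow, ← Real.rpow_mul ht.le]
    congr 1
    ring
  rw [hk, hsn, hsp]
  have e1 : t ^ (-(p / 2)) = (t ^ (p / 2))⁻¹ := by
    rw [← Real.rpow_neg ht.le]
  have e2 : t ^ (-(n : ℝ) / 2) * t ^ ((n : ℝ) / 2) = 1 := by
    rw [← Real.rpow_add ht, show -(n:ℝ)/2 + (n:ℝ)/2 = 0 by ring, Real.rpow_zero]
  rw [e1]
  calc (t ^ (p / 2))⁻¹ * (t ^ ((n:ℝ) / 2) *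
        ((4 * π) ^ (-(n : ℝ) / 2) * t ^ (-(n : ℝ) / 2) * rexp (-‖z‖ ^ 2 / 4) *
          |f x - f (x + Real.sqrt t • z)| ^ p))
      = (t ^ (-(n : ℝ) / 2) * t ^ ((n:ℝ) / 2)) * ((4 * π) ^ (-(n : ℝ) / 2) *
          rexp (-‖z‖ ^ 2 / 4) * (|f x - f (x + Real.sqrt t • z)| ^ p * (t ^ (p / 2))⁻¹)) := by
        ring
    _ = (4 * π) ^ (-(n : ℝ) / 2) * rexp (-‖z‖ ^ 2 / 4) *
          (|f x - f (x + Real.sqrt t • z)| ^ p * (t ^ (p / 2))⁻¹) := by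
        rw [e2, one_mul]

end Aux

/-- Euclidean Lipschitz case of the heat-kernel characterization of the Cheeger `p`-energy. -/
theorem stmt_0 (n : ℕ) (hn : 1 ≤ n) (p : ℝ) (hp : 1 < p)
    (f : EuclideanSpace ℝ (Fin n) → ℝ)
    (hf : ∃ C : NNReal, LipschitzWith C f) (hsupp : HasCompactSupport f) :
    Tendsto (fun t : ℝ =>
        t ^ (-(p / 2)) * ∫ x, ∫ y, heatKernel n t x y * |f x - f y| ^ p)
      (nhdsWithin 0 (Set.Ioi 0))
      (nhds ((2 ^ p / Real.sqrt Real.pi) * Real.Gamma ((p + 1) / 2) *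
        ∫ x, ‖fderiv ℝ f x‖ ^ p)) := by
  classical
  obtain ⟨C, hC⟩ := hf
  have hp0 : (0:ℝ) < p := by linarith
  have hfc : Continuous f := hC.continuous
  -- support radius
  obtain ⟨r, hr⟩ := hsupp.isBounded.subset_closedBall 0
  set R : ℝ := max r 0 with hRdef
  have hR0 : (0:ℝ) ≤ R := le_max_right r 0
  have hfK : ∀ x, f x ≠ 0 → ‖x‖ ≤ R := by
    intro x hx
    have hmem : x ∈ tsupport f := subset_tsupport f (by simpa [Function.mem_support] using hx)
    have := hr hmem
    rw [Metric.mem_closedBall, dist_zero_right] at this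
    exact this.trans (le_max_left r 0)
  set c1 : ℝ := (4 * π) ^ (-(n : ℝ) / 2) with hc1
  set A : ℝ := c1 * (C:ℝ) ^ p * rexp (4 * p ^ 2 + R ^ 2 / 8) with hA
  set μ : Measure (EuclideanSpace ℝ (Fin n) × EuclideanSpace ℝ (Fin n)) :=
    (volume : Measure (EuclideanSpace ℝ (Fin n))).prod volume with hμ
  set bound : EuclideanSpace ℝ (Fin n) × EuclideanSpace ℝ (Fin n) → ℝ :=
    fun q => A * (rexp (-‖q.1‖ ^ 2 / 16) * rexp (-‖q.2‖ ^ 2 / 16)) with hbound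
  have hboundInt : Integrable bound μ :=
    (((integrable_gauss16 n)).mul_prod ((integrable_gauss16 n))).const_mul A
  set Φ : ℝ → EuclideanSpace ℝ (Fin n) × EuclideanSpace ℝ (Fin n) → ℝ := fun t q =>
    c1 * rexp (-‖q.2‖ ^ 2 / 4) *
      |(f (q.1 + Real.sqrt t • q.2) - f q.1) / Real.sqrt t| ^ p with hΦ
  set Ψ : EuclideanSpace ℝ (Fin n) × EuclideanSpace ℝ (Fin n) → ℝ := fun q =>
    c1 * rexp (-‖q.2‖ ^ 2 / 4) * |fderiv ℝ f q.1 q.2| ^ p with hΨ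
  -- continuity of Φ t
  have hΦcont : ∀ t, Continuous (Φ t) := by
    intro t
    apply Continuous.mul
    · exact continuous_const.mul
        (Real.continuous_exp.comp ((continuous_snd.norm.pow 2).neg.div_const 4))
    · exact (continuous_abs_rpow p hp0).comp (by fun_prop)
  -- nonnegativity of Φ
  have hΦnonneg : ∀ t q, 0 ≤ Φ t q := by
    intro t q
    rw [hΦ]
    have : (0:ℝ) < c1 := Real.rpow_pos_of_pos (by positivity) _
    positivity
  -- the bound for Φ t, 0 < t ≤ 1
  have hΦle : ∀ t ∈ Set.Ioc (0:ℝ) 1, ∀ q, Φ t q ≤ bound q := by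
    rintro t ⟨ht0, ht1⟩ ⟨x, z⟩
    have hst : (0:ℝ) < Real.sqrt t := Real.sqrt_pos.2 ht0
    have hst1 : Real.sqrt t ≤ 1 := by
      rw [show (1:ℝ) = Real.sqrt 1 by simp]
      exact Real.sqrt_le_sqrt ht1
    set val : ℝ := (f (x + Real.sqrt t • z) - f x) / Real.sqrt t with hval
    have h1 : |val| ≤ (C:ℝ) * ‖z‖ := by
      rw [hval, abs_div, abs_of_nonneg hst.le, div_le_iff₀ hst]
      calc |f (x + Real.sqrt t • z) - f x| ≤ (C:ℝ) * ‖x + Real.sqrt t • z - x‖ := by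
            have := hC.dist_le_mul (x + Real.sqrt t • z) x
            rwa [Real.dist_eq, dist_eq_norm] at this
        _ = (C:ℝ) * (Real.sqrt t * ‖z‖) := by
            rw [show x + Real.sqrt t • z - x = Real.sqrt t • z by abel, norm_smul,
              Real.norm_eq_abs, abs_of_nonneg hst.le]
        _ = (C:ℝ) * ‖z‖ * Real.sqrt t := by ring
    have h2 : val ≠ 0 → ‖x‖ ≤ R + ‖z‖ := by
      intro hv
      have hne : f (x + Real.sqrt t • z) ≠ f x := by
        intro heq
        apply hv
        rw [hval, heq, sub_self, zero_div]
      by_cases hfx : f x ≠ 0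
      · exact (hfK x hfx).trans (by linarith [norm_nonneg z])
      · push_neg at hfx
        have hfy : f (x + Real.sqrt t • z) ≠ 0 := by rw [hfx] at hne; exact hne
        have hy := hfK _ hfy
        calc ‖x‖ = ‖x + Real.sqrt t • z - Real.sqrt t • z‖ := by congr 1; abel
          _ ≤ ‖x + Real.sqrt t • z‖ + ‖Real.sqrt t • z‖ := norm_sub_le _ _
          _ ≤ R + ‖z‖ := by
              refine add_le_add hy ?_
              rw [norm_smul, Real.norm_eq_abs, abs_of_nonneg hst.le]
              exact mul_le_of_le_one_left (norm_nonneg z) hst1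
    exact bound_aux n (C:ℝ) R p C.2 hR0 hp0 x z val h1 h2
  -- norm of fderiv bounded by C
  have hfd : ∀ x, ‖fderiv ℝ f x‖ ≤ (C:ℝ) := by
    intro x
    by_cases hx : DifferentiableAt ℝ f x
    · exact norm_fderiv_le_of_lipschitz ℝ hC
    · rw [fderiv_zero_of_not_differentiableAt hx]
      simpa using C.2
  -- the bound for Ψ
  have hΨle : ∀ q, Ψ q ≤ bound q := by
    rintro ⟨x, z⟩
    refine bound_aux n (C:ℝ) R p C.2 hR0 hp0 x z _ ?_ ?_
    · calc |fderiv ℝ f x z| ≤ ‖fderiv ℝ f x‖ * ‖z‖ := (fderiv ℝ f x).le_opNorm z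
        _ ≤ (C:ℝ) * ‖z‖ := mul_le_mul_of_nonneg_right (hfd x) (norm_nonneg z)
    · intro hv
      have hx : x ∈ tsupport f := by
        by_contra hxx
        rw [fderiv_of_notMem_tsupport (𝕜 := ℝ) hxx] at hv
        simp at hv
      have := hr hx
      rw [Metric.mem_closedBall, dist_zero_right] at this
      linarith [norm_nonneg z, this.trans (le_max_left r 0)]
  have hΨnonneg : ∀ q, 0 ≤ Ψ q := by
    intro q
    rw [hΨ]
    have : (0:ℝ) < c1 := Real.rpow_pos_of_pos (by positivity) _
    positivity
  -- measurability of Ψ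
  have hΨmeas : AEStronglyMeasurable Ψ μ := by
    have m1 : Measurable fun q : EuclideanSpace ℝ (Fin n) × EuclideanSpace ℝ (Fin n) =>
        (fderiv ℝ f q.1) q.2 := by
      have hcont : Continuous fun φ : (EuclideanSpace ℝ (Fin n) →L[ℝ] ℝ) ×
          EuclideanSpace ℝ (Fin n) => φ.1 φ.2 := isBoundedBilinearMap_apply.continuous
      exact hcont.measurable.comp
        (((measurable_fderiv ℝ f).comp measurable_fst).prodMk measurable_snd)
    have m2 : Measurable Ψ := by
      apply Measurable.mul
      · exact (continuous_const.mul
          (Real.continuous_exp.comp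
            ((continuous_snd.norm.pow 2).neg.div_const 4))).measurable
      · exact ((continuous_abs_rpow p hp0).measurable).comp m1
    exact m2.aestronglyMeasurable
  -- integrability of Ψ
  have hΨint : Integrable Ψ μ :=
    hboundInt.mono' hΨmeas (Filter.Eventually.of_forall fun q => by
      rw [Real.norm_eq_abs, abs_of_nonneg (hΨnonneg q)]; exact hΨle q)
  -- integrability of Φ t for t ∈ Ioc 0 1
  have hΦint : ∀ t ∈ Set.Ioc (0:ℝ) 1, Integrable (Φ t) μ := fun t ht =>
    hboundInt.mono' (hΦcont t).aestronglyMeasurable (Filter.Eventually.of_forall fun q => by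
      rw [Real.norm_eq_abs, abs_of_nonneg (hΦnonneg t q)]; exact hΦle t ht q)
  -- a.e. pointwise limit
  have hae : ∀ᵐ x : EuclideanSpace ℝ (Fin n) ∂(volume : Measure (EuclideanSpace ℝ (Fin n))),
      DifferentiableAt ℝ f x := hC.ae_differentiableAt
  have hlim : ∀ᵐ q ∂μ, Tendsto (fun t => Φ t q) (nhdsWithin 0 (Set.Ioi 0)) (nhds (Ψ q)) := by
    have h1 : ∀ᵐ q ∂μ, DifferentiableAt ℝ f q.1 :=
      MeasureTheory.Measure.quasiMeasurePreserving_fst.ae hae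
    filter_upwards [h1] with q hq
    have := ((continuous_abs_rpow p hp0).tendsto _).comp (dirLimit hq q.2)
    exact this.const_mul _
  -- dominated convergence
  have hDCT : Tendsto (fun t => ∫ q, Φ t q ∂μ) (nhdsWithin 0 (Set.Ioi 0))
      (nhds (∫ q, Ψ q ∂μ)) := by
    refine tendsto_integral_filter_of_dominated_convergence bound ?_ ?_ hboundInt hlim
    · exact Filter.Eventually.of_forall fun t => (hΦcont t).aestronglyMeasurable
    · filter_upwards [Ioc_mem_nhdsGT_of_mem (Set.mem_Ico.2 ⟨le_refl 0, one_pos⟩)] with t ht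
      exact Filter.Eventually.of_forall fun q => by
        rw [Real.norm_eq_abs, abs_of_nonneg (hΦnonneg t q)]; exact hΦle t ht q
  -- identify the limit
  have hΨval : ∫ q, Ψ q ∂μ = (2 ^ p / Real.sqrt π) * Real.Gamma ((p + 1) / 2) *
      ∫ x, ‖fderiv ℝ f x‖ ^ p := by
    rw [hμ] at hΨint ⊢
    rw [MeasureTheory.integral_prod _ hΨint]
    have hxeq : ∀ x : EuclideanSpace ℝ (Fin n),
        (∫ z, Ψ (x, z)) = (2 ^ p / Real.sqrt π) * Real.Gamma ((p + 1) / 2) *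
          ‖fderiv ℝ f x‖ ^ p := by
      intro x
      rw [hΨ]
      exact momentCLM n hn p hp0 (fderiv ℝ f x)
    simp_rw [hxeq]
    rw [integral_const_mul]
  -- eventual equality of the two expressions
  have hEq : ∀ᶠ t in nhdsWithin 0 (Set.Ioi 0),
      t ^ (-(p / 2)) * ∫ x, ∫ y, heatKernel n t x y * |f x - f y| ^ p = ∫ q, Φ t q ∂μ := by
    filter_upwards [Ioc_mem_nhdsGT_of_mem (Set.mem_Ico.2 ⟨le_refl 0, one_pos⟩)] with t ht
    rw [step1 n p hp0 f t ht.1, hμ, MeasureTheory.integral_prod _ (hμ ▸ hΦint t ht)]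
  exact Tendsto.congr' (EventuallyEq.symm hEq) (hΨval ▸ hDCT)
end

section
/- Let n ≥ 1. Let f : ℝⁿ → ℝ be Lipschitz with compact support. Then the limit as t → 0⁺ of t^(−1/2) ∬_{ℝⁿ×ℝⁿ} p_t(x,y) |f(x) − f(y)| dx dy exists and equals (2/√π) · ∫_{ℝⁿ} ‖Df(x)‖ dx, where Df(x) is the Fréchet derivative of f at x (which exists for Lebesgue-a.e. x by Rademacher's theorem; at points of non-differentiability the integrand uses the convention Df(x) = 0). -/
open MeasureTheory Real Filter

lemma gauss1d_s1 : ∫ x : ℝ, Real.exp (-x^2) = Real.sqrt Real.pi := by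
  simpa using integral_gaussian 1

lemma gauss1d_Ioi : ∫ x in Set.Ioi (0:ℝ), x * Real.exp (-x^2) = 1/2 := by
  have hderiv : ∀ x ∈ Set.Ici (0:ℝ), HasDerivAt (fun x : ℝ => -(Real.exp (-x^2)/2))
      (x * Real.exp (-x^2)) x := by
    intro x _
    have h : HasDerivAt (fun x : ℝ => Real.exp (-x^2)) (Real.exp (-x^2) * -(2*x)) x := by
      simpa using (((hasDerivAt_pow 2 x).neg).exp)
    have := (h.div_const 2).neg
    exact this.congr_deriv (by ring)
  have hint : IntegrableOn (fun x : ℝ => x * Real.exp (-x^2)) (Set.Ioi 0) := by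
    have := (integrable_mul_exp_neg_mul_sq (b := 1) one_pos).integrableOn (s := Set.Ioi 0)
    simpa using this
  have htend : Tendsto (fun x : ℝ => -(Real.exp (-x^2)/2)) atTop (nhds 0) := by
    have h1 : Tendsto (fun x : ℝ => -x^2) atTop atBot :=
      tendsto_neg_atBot_iff.mpr (tendsto_pow_atTop (n := 2) (by norm_num))
    have h2 : Tendsto (fun x : ℝ => Real.exp (-x^2)) atTop (nhds 0) :=
      Real.tendsto_exp_atBot.comp h1
    simpa [neg_div] using (h2.neg.div_const 2)
  have := integral_Ioi_of_hasDerivAt_of_tendsto' hderiv hint htend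
  rw [this]
  norm_num

lemma gauss1d_abs : ∫ x : ℝ, |x| * Real.exp (-x^2) = 1 := by
  have h : (fun x : ℝ => |x| * Real.exp (-x^2)) = (fun x : ℝ => (fun s => s * Real.exp (-s^2)) |x|) := by
    funext x; simp [sq_abs]
  rw [h, integral_comp_abs (f := fun s => s * Real.exp (-s^2)), gauss1d_Ioi]
  norm_num


lemma gaussE_coord {n : ℕ} (i₀ : Fin n) :
    ∫ z : EuclideanSpace ℝ (Fin n), Real.exp (-‖z‖^2) * |z i₀|
      = Real.sqrt Real.pi ^ (n-1) := by
  classical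
  set g : Fin n → ℝ → ℝ :=
    fun i s => if i = i₀ then |s| * Real.exp (-s^2) else Real.exp (-s^2) with hg
  have hmp : MeasurePreserving (MeasurableEquiv.toLp 2 (Fin n → ℝ)) :=
    (EuclideanSpace.volume_preserving_symm_measurableEquiv_toLp (Fin n)).symm
  rw [← hmp.integral_comp (MeasurableEquiv.measurableEmbedding _)]
  have hcalc : ∀ x : Fin n → ℝ,
      Real.exp (-‖(MeasurableEquiv.toLp 2 (Fin n → ℝ)) x‖^2)
        * |((MeasurableEquiv.toLp 2 (Fin n → ℝ)) x) i₀|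
      = ∏ i, g i (x i) := by
    intro x
    have hnorm : ‖(MeasurableEquiv.toLp 2 (Fin n → ℝ)) x‖^2 = ∑ i, (x i)^2 := by
      simp only [MeasurableEquiv.coe_toLp,
        EuclideanSpace.norm_eq, PiLp.toLp_apply, Real.norm_eq_abs, sq_abs]
      rw [sq_sqrt]
      exact Finset.sum_nonneg fun i _ => by positivity
    have happ : ((MeasurableEquiv.toLp 2 (Fin n → ℝ)) x) i₀ = x i₀ := rfl
    have h1 : ∏ i, g i (x i)
        = (|x i₀| * Real.exp (-(x i₀)^2)) * ∏ i ∈ Finset.univ.erase i₀, Real.exp (-(x i)^2) := by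
      rw [← Finset.mul_prod_erase Finset.univ (fun i => g i (x i)) (Finset.mem_univ i₀)]
      have : g i₀ (x i₀) = |x i₀| * Real.exp (-(x i₀)^2) := by simp [hg]
      rw [this]
      congr 1
      exact Finset.prod_congr rfl fun i hi => by simp [hg, Finset.ne_of_mem_erase hi]
    have h2 : Real.exp (-(∑ i, (x i)^2))
        = Real.exp (-(x i₀)^2) * ∏ i ∈ Finset.univ.erase i₀, Real.exp (-(x i)^2) := by
      rw [show -(∑ i, (x i)^2) = ∑ i, -((x i)^2) by rw [Finset.sum_neg_distrib], Real.exp_sum,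
        ← Finset.mul_prod_erase Finset.univ _ (Finset.mem_univ i₀)]
    rw [hnorm, happ, h1, h2]
    ring
  rw [show (fun x : Fin n → ℝ => Real.exp (-‖(MeasurableEquiv.toLp 2 (Fin n → ℝ)) x‖^2)
        * |((MeasurableEquiv.toLp 2 (Fin n → ℝ)) x) i₀|) = fun x => ∏ i, g i (x i)
      from funext hcalc]
  rw [MeasureTheory.integral_fintype_prod_volume_eq_prod (ι := Fin n) g]
  have hval : ∀ i, (∫ s, g i s) = if i = i₀ then (1:ℝ) else Real.sqrt Real.pi := by
    intro i
    by_cases h : i = i₀ <;> simp only [hg, h, if_pos, if_neg, if_true, if_false]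
    · exact gauss1d_abs
    · exact gauss1d_s1
  rw [Finset.prod_congr rfl fun i _ => hval i,
    ← Finset.mul_prod_erase Finset.univ _ (Finset.mem_univ i₀), if_pos rfl, one_mul,
    Finset.prod_congr rfl fun i hi => if_neg (Finset.ne_of_mem_erase hi), Finset.prod_const,
    Finset.card_erase_of_mem (Finset.mem_univ i₀), Finset.card_univ, Fintype.card_fin]


lemma gaussE_dual {n : ℕ} (hn : 1 ≤ n) (ξ : EuclideanSpace ℝ (Fin n) →L[ℝ] ℝ) :
    ∫ z : EuclideanSpace ℝ (Fin n), Real.exp (-‖z‖^2) * |ξ z|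
      = ‖ξ‖ * Real.sqrt Real.pi ^ (n-1) := by
  classical
  rcases eq_or_ne ξ 0 with rfl | hξ
  · simp
  set E := EuclideanSpace ℝ (Fin n)
  set v : E := (InnerProductSpace.toDual ℝ E).symm ξ with hv
  have hvx : ∀ z : E, ξ z = inner ℝ v z := fun z =>
    (InnerProductSpace.toDual_symm_apply (𝕜 := ℝ)).symm
  have hnv : ‖v‖ = ‖ξ‖ := (InnerProductSpace.toDual ℝ E).symm.norm_map ξ
  have hv0 : v ≠ 0 := by
    intro h
    apply hξ
    rw [← norm_eq_zero, ← hnv, h, norm_zero]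
  set u : E := ‖v‖⁻¹ • v with hu
  have hun : ‖u‖ = 1 := norm_smul_inv_norm hv0
  set i₀ : Fin n := ⟨0, hn⟩
  have hcard : Module.finrank ℝ E = Fintype.card (Fin n) := by
    simp [E, finrank_euclideanSpace_fin]
  have hON : Orthonormal ℝ (Set.restrict {i₀} (fun _ : Fin n => u)) := by
    constructor
    · intro i; exact hun
    · intro i j hij
      exact absurd (Subsingleton.elim i j) hij
  obtain ⟨b, hb⟩ := hON.exists_orthonormalBasis_extension_of_card_eq hcard
  have hbi : b i₀ = u := hb i₀ rfl
  have hmp := (b.repr.symm : EuclideanSpace ℝ (Fin n) ≃ₗᵢ[ℝ] E).measurePreserving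
  rw [← hmp.integral_comp b.repr.symm.toHomeomorph.measurableEmbedding]
  have hptw : ∀ w : EuclideanSpace ℝ (Fin n),
      Real.exp (-‖b.repr.symm w‖^2) * |ξ (b.repr.symm w)|
        = ‖ξ‖ * (Real.exp (-‖w‖^2) * |w i₀|) := by
    intro w
    have h1 : ‖b.repr.symm w‖ = ‖w‖ := b.repr.symm.norm_map w
    have h2 : ξ (b.repr.symm w) = ‖v‖ * (w i₀) := by
      rw [hvx]
      have hval : v = ‖v‖ • u := by
        rw [hu, smul_smul, mul_inv_cancel₀ (norm_ne_zero_iff.2 hv0), one_smul]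
      have hstep : inner ℝ v (b.repr.symm w) = ‖v‖ * inner ℝ u (b.repr.symm w) := by
        conv_lhs => rw [hval]
        exact real_inner_smul_left u (b.repr.symm w) ‖v‖
      rw [hstep, ← hbi, ← OrthonormalBasis.repr_apply_apply,
        LinearIsometryEquiv.apply_symm_apply]
    rw [h1, h2, abs_mul, abs_of_nonneg (norm_nonneg v), hnv]
    ring
  rw [show (fun w : EuclideanSpace ℝ (Fin n) => Real.exp (-‖b.repr.symm w‖^2)
      * |ξ (b.repr.symm w)|) = fun w => ‖ξ‖ * (Real.exp (-‖w‖^2) * |w i₀|) from funext hptw,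
    MeasureTheory.integral_const_mul, gaussE_coord i₀]


lemma limit_pt {n : ℕ} {f : EuclideanSpace ℝ (Fin n) → ℝ}
    {x : EuclideanSpace ℝ (Fin n)} (hx : DifferentiableAt ℝ f x)
    (z : EuclideanSpace ℝ (Fin n)) :
    Tendsto (fun t : ℝ => |f (x + (2 * Real.sqrt t) • z) - f x| / Real.sqrt t)
      (nhdsWithin 0 (Set.Ioi 0)) (nhds (2 * |fderiv ℝ f x z|)) := by
  set g : ℝ → ℝ := fun s => f (x + s • z) with hgdef
  have hg : HasDerivAt g (fderiv ℝ f x z) 0 := by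
    have h1 : HasDerivAt (fun s : ℝ => x + s • z) z 0 := by
      simpa using ((hasDerivAt_id (0:ℝ)).smul_const z).const_add x
    have h2 : HasFDerivAt f (fderiv ℝ f x) ((fun s : ℝ => x + s • z) 0) := by
      simpa using hx.hasFDerivAt
    exact h2.comp_hasDerivAt 0 h1
  have hslope : Tendsto (slope g 0) (nhdsWithin 0 {(0:ℝ)}ᶜ) (nhds (fderiv ℝ f x z)) :=
    hasDerivAt_iff_tendsto_slope.1 hg
  have hmap : Tendsto (fun t : ℝ => 2 * Real.sqrt t) (nhdsWithin 0 (Set.Ioi 0))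
      (nhdsWithin 0 {(0:ℝ)}ᶜ) := by
    rw [tendsto_nhdsWithin_iff]
    constructor
    · have : Tendsto (fun t : ℝ => 2 * Real.sqrt t) (nhds 0) (nhds (2 * Real.sqrt 0)) :=
        (continuous_const.mul Real.continuous_sqrt).continuousAt.tendsto
      simp only [Real.sqrt_zero, mul_zero] at this
      exact this.mono_left nhdsWithin_le_nhds
    · filter_upwards [self_mem_nhdsWithin] with t ht
      have : 0 < Real.sqrt t := Real.sqrt_pos.2 ht
      simp only [Set.mem_compl_iff, Set.mem_singleton_iff]
      positivity
  have h3 : Tendsto (fun t : ℝ => 2 * |slope g 0 (2 * Real.sqrt t)|)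
      (nhdsWithin 0 (Set.Ioi 0)) (nhds (2 * |fderiv ℝ f x z|)) :=
    ((hslope.comp hmap).abs).const_mul 2
  refine h3.congr' ?_
  filter_upwards [self_mem_nhdsWithin] with t (ht : 0 < t)
  have hst : 0 < Real.sqrt t := Real.sqrt_pos.2 ht
  have : slope g 0 (2 * Real.sqrt t) = (f (x + (2 * Real.sqrt t) • z) - f x) / (2 * Real.sqrt t) := by
    rw [slope_def_field]
    simp [hgdef, div_eq_mul_inv]
  rw [this, abs_div, abs_of_pos (by positivity : (0:ℝ) < 2 * Real.sqrt t)]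
  field_simp


lemma const_calc {n : ℕ} {t : ℝ} (ht : 0 < t) :
    t ^ (-(1:ℝ)/2) * ((2 * Real.sqrt t) ^ n * (4 * Real.pi * t) ^ (-(n : ℝ) / 2))
      = Real.pi ^ (-(n:ℝ)/2) / Real.sqrt t := by
  have h4t : (0:ℝ) < 4 * t := by linarith
  have h1 : (2 * Real.sqrt t) ^ n = (4 * t) ^ ((n:ℝ)/2) := by
    have h2s : 2 * Real.sqrt t = (4 * t) ^ ((1:ℝ)/2) := by
      rw [← Real.sqrt_eq_rpow, show (4:ℝ)*t = 2^2 * t by ring,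
        Real.sqrt_mul (by positivity : (0:ℝ) ≤ 2^2) t, Real.sqrt_sq (by norm_num : (0:ℝ) ≤ 2)]
    rw [h2s, ← Real.rpow_natCast ((4*t) ^ ((1:ℝ)/2)) n, ← Real.rpow_mul h4t.le]
    congr 1
    ring
  have h2 : (4 * Real.pi * t) ^ (-(n : ℝ) / 2)
      = (4 * t) ^ (-(n:ℝ)/2) * Real.pi ^ (-(n:ℝ)/2) := by
    rw [show (4:ℝ) * Real.pi * t = (4*t) * Real.pi by ring,
      Real.mul_rpow h4t.le Real.pi_pos.le]
  rw [h1, h2, show t ^ (-(1:ℝ)/2) * ((4*t) ^ ((n:ℝ)/2) * ((4*t) ^ (-(n:ℝ)/2) * Real.pi ^ (-(n:ℝ)/2)))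
      = ((4*t) ^ ((n:ℝ)/2) * (4*t) ^ (-(n:ℝ)/2)) * (t ^ (-(1:ℝ)/2) * Real.pi ^ (-(n:ℝ)/2)) by ring,
    ← Real.rpow_add h4t, show (n:ℝ)/2 + -(n:ℝ)/2 = 0 by ring, Real.rpow_zero, one_mul,
    show (-(1:ℝ)/2) = -(1/2) by ring, Real.rpow_neg ht.le, Real.sqrt_eq_rpow]
  field_simp

lemma inner_cov {n : ℕ} (f : EuclideanSpace ℝ (Fin n) → ℝ) {t : ℝ} (ht : 0 < t)
    (x : EuclideanSpace ℝ (Fin n)) :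
    t ^ (-(1:ℝ)/2) * ∫ y, heatKernel n t x y * |f x - f y|
      = ∫ z, Real.pi ^ (-(n:ℝ)/2) * Real.exp (-‖z‖^2)
          * (|f (x + (2 * Real.sqrt t) • z) - f x| / Real.sqrt t) := by
  set c : ℝ := 2 * Real.sqrt t with hc
  have hcpos : 0 < c := by
    have := Real.sqrt_pos.2 ht
    positivity
  have hG : ∫ y, heatKernel n t x y * |f x - f y|
      = ∫ w, heatKernel n t x (x + w) * |f x - f (x + w)| :=
    (MeasureTheory.integral_add_left_eq_self _ x).symm
  have hsmul : ∫ z, heatKernel n t x (x + c • z) * |f x - f (x + c • z)|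
      = ((c ^ n)⁻¹ : ℝ) • ∫ w, heatKernel n t x (x + w) * |f x - f (x + w)| := by
    have := MeasureTheory.Measure.integral_comp_smul_of_nonneg (volume : Measure (EuclideanSpace ℝ (Fin n)))
      (fun w => heatKernel n t x (x + w) * |f x - f (x + w)|) c (hR := hcpos.le)
    rw [finrank_euclideanSpace_fin] at this
    exact this
  have hflip : ∫ w, heatKernel n t x (x + w) * |f x - f (x + w)|
      = (c ^ n) * ∫ z, heatKernel n t x (x + c • z) * |f x - f (x + c • z)| := by
    rw [hsmul, smul_eq_mul, ← mul_assoc, mul_inv_cancel₀ (by positivity), one_mul]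
  rw [hG, hflip, ← mul_assoc, ← MeasureTheory.integral_const_mul]
  apply integral_congr_ae
  apply Filter.Eventually.of_forall
  intro z
  have hnorm : ‖x - (x + c • z)‖^2 = (4 * t) * ‖z‖^2 := by
    have h0 : x - (x + c • z) = -(c • z) := by abel
    rw [h0, norm_neg, norm_smul, mul_pow, Real.norm_eq_abs, sq_abs, hc]
    have : (2 * Real.sqrt t)^2 = 4 * t := by
      rw [mul_pow, Real.sq_sqrt ht.le]; ring
    rw [this]
  have hexp : Real.exp (-‖x - (x + c • z)‖ ^ 2 / (4 * t)) = Real.exp (-‖z‖^2) := by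
    rw [hnorm]
    congr 1
    field_simp
  have habs : |f x - f (x + c • z)| = |f (x + c • z) - f x| := abs_sub_comm _ _
  calc t ^ (-(1:ℝ)/2) * c ^ n * (heatKernel n t x (x + c • z) * |f x - f (x + c • z)|)
      = (t ^ (-(1:ℝ)/2) * (c ^ n * (4 * Real.pi * t) ^ (-(n : ℝ) / 2)))
        * (Real.exp (-‖z‖^2) * |f (x + c • z) - f x|) := by
        rw [heatKernel, hexp, habs]; ring
    _ = _ := by
        rw [const_calc ht]
        field_simp


lemma integrable_gaussE {n : ℕ} {b : ℝ} (hb : 0 < b) :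
    Integrable (fun v : EuclideanSpace ℝ (Fin n) => Real.exp (-b * ‖v‖^2)) := by
  have h := GaussianFourier.integrable_cexp_neg_mul_sq_norm_add
    (V := EuclideanSpace ℝ (Fin n)) (b := (b:ℂ)) (by simpa using hb) 0 0
  have h2 := h.norm
  refine h2.congr (Filter.Eventually.of_forall fun v => ?_)
  simp only [Complex.norm_exp, zero_mul, add_zero]
  norm_num
  left
  norm_cast

lemma integrable_weight {n : ℕ} {R : ℝ} (hR : 0 ≤ R) :
    Integrable (fun z : EuclideanSpace ℝ (Fin n) =>
      ‖z‖ * Real.exp (R*‖z‖/4 + ‖z‖^2/4 - ‖z‖^2)) := by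
  have hg : Integrable (fun z : EuclideanSpace ℝ (Fin n) =>
      Real.exp ((1+R/4)^2) * Real.exp (-(1/2) * ‖z‖^2)) :=
    (integrable_gaussE (by norm_num)).const_mul _
  refine hg.mono' ?_ (Filter.Eventually.of_forall fun z => ?_)
  · apply Continuous.aestronglyMeasurable
    exact continuous_norm.mul (Real.continuous_exp.comp (by fun_prop))
  · set s := ‖z‖ with hs
    have hs0 : 0 ≤ s := norm_nonneg z
    have h1 : s ≤ Real.exp s := (Real.add_one_le_exp s).trans' (by linarith)
    have h2 : ‖s * Real.exp (R*s/4 + s^2/4 - s^2)‖ = s * Real.exp (R*s/4 + s^2/4 - s^2) := by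
      rw [Real.norm_eq_abs, abs_of_nonneg (by positivity)]
    rw [h2]
    calc s * Real.exp (R*s/4 + s^2/4 - s^2)
        ≤ Real.exp s * Real.exp (R*s/4 + s^2/4 - s^2) :=
          mul_le_mul_of_nonneg_right h1 (Real.exp_pos _).le
      _ = Real.exp (s + (R*s/4 + s^2/4 - s^2)) := by rw [← Real.exp_add]
      _ ≤ Real.exp ((1+R/4)^2 + -(1/2) * s^2) := by
          apply Real.exp_le_exp.2
          nlinarith [sq_nonneg (s/2 - (1+R/4))]
      _ = Real.exp ((1+R/4)^2) * Real.exp (-(1/2) * s^2) := Real.exp_add _ _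

/-- Euclidean Lipschitz case of the heat-kernel characterization of the total variation. -/
theorem stmt_1 (n : ℕ) (hn : 1 ≤ n)
    (f : EuclideanSpace ℝ (Fin n) → ℝ)
    (hf : ∃ C : NNReal, LipschitzWith C f) (hsupp : HasCompactSupport f) :
    Tendsto (fun t : ℝ =>
        t ^ (-(1 : ℝ) / 2) * ∫ x, ∫ y, heatKernel n t x y * |f x - f y|)
      (nhdsWithin 0 (Set.Ioi 0))
      (nhds ((2 / Real.sqrt Real.pi) * ∫ x, ‖fderiv ℝ f x‖)) := by
  classical
  obtain ⟨C, hLip⟩ := hf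
  obtain ⟨R, hR0, hR⟩ := hsupp.isBounded.subset_closedBall_lt 0 0
  have hfc : Continuous f := hLip.continuous
  have hCnn : (0:ℝ) ≤ C := C.coe_nonneg
  have hπ : (0:ℝ) < Real.pi ^ (-(n:ℝ)/2) := Real.rpow_pos_of_pos Real.pi_pos _
  set l := nhdsWithin (0:ℝ) (Set.Ioi 0) with hl
  set Φ : ℝ → EuclideanSpace ℝ (Fin n) × EuclideanSpace ℝ (Fin n) → ℝ :=
    fun t p => Real.pi ^ (-(n:ℝ)/2) * Real.exp (-‖p.2‖^2)
      * (|f (p.1 + (2 * Real.sqrt t) • p.2) - f p.1| / Real.sqrt t) with hΦ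
  set L : EuclideanSpace ℝ (Fin n) × EuclideanSpace ℝ (Fin n) → ℝ :=
    fun p => Real.pi ^ (-(n:ℝ)/2) * Real.exp (-‖p.2‖^2) * (2 * |fderiv ℝ f p.1 p.2|) with hLdef
  set A : ℝ := Real.pi ^ (-(n:ℝ)/2) * (2*C) * Real.exp (R^2/16) with hA
  set bound : EuclideanSpace ℝ (Fin n) × EuclideanSpace ℝ (Fin n) → ℝ :=
    fun p => A * (Real.exp (-(1/16) * ‖p.1‖^2)
      * (‖p.2‖ * Real.exp (R*‖p.2‖/4 + ‖p.2‖^2/4 - ‖p.2‖^2))) with hbd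
  have hbound_nonneg : ∀ p, 0 ≤ bound p := by
    intro p; rw [hbd, hA]; positivity
  have hbound_int : Integrable bound (volume.prod volume) :=
    ((integrable_gaussE (by norm_num : (0:ℝ) < 1/16)).mul_prod (integrable_weight hR0.le)).const_mul A
  have hkey : ∀ (x z : EuclideanSpace ℝ (Fin n)), ‖x‖ ≤ R + 2*‖z‖ →
      Real.pi ^ (-(n:ℝ)/2) * Real.exp (-‖z‖^2) * (2*C*‖z‖) ≤ bound (x, z) := by
    intro x z hx
    have hx2 : ‖x‖^2 ≤ (R + 2*‖z‖)^2 := by nlinarith [norm_nonneg x, norm_nonneg z]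
    have hexp : Real.exp (-‖z‖^2)
        ≤ Real.exp (R^2/16 + (-(1/16)*‖x‖^2) + (R*‖z‖/4 + ‖z‖^2/4 - ‖z‖^2)) := by
      apply Real.exp_le_exp.2
      nlinarith [hx2]
    calc Real.pi ^ (-(n:ℝ)/2) * Real.exp (-‖z‖^2) * (2*C*‖z‖)
        = (Real.pi ^ (-(n:ℝ)/2) * (2*C) * ‖z‖) * Real.exp (-‖z‖^2) := by ring
      _ ≤ (Real.pi ^ (-(n:ℝ)/2) * (2*C) * ‖z‖)
          * Real.exp (R^2/16 + (-(1/16)*‖x‖^2) + (R*‖z‖/4 + ‖z‖^2/4 - ‖z‖^2)) := by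
          apply mul_le_mul_of_nonneg_left hexp
          positivity
      _ = bound (x, z) := by
          rw [hbd, hA, Real.exp_add, Real.exp_add]; ring
  have hDf : ∀ x, ‖fderiv ℝ f x‖ ≤ C := fun x => norm_fderiv_le_of_lipschitz ℝ hLip
  have hfzero : ∀ x : EuclideanSpace ℝ (Fin n), R < ‖x‖ → f x = 0 := by
    intro x hx
    apply image_eq_zero_of_notMem_tsupport
    intro hmem
    have := hR hmem
    rw [Metric.mem_closedBall, dist_zero_right] at this
    linarith
  have hDfzero : ∀ x : EuclideanSpace ℝ (Fin n), R < ‖x‖ → fderiv ℝ f x = 0 := by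
    intro x hx
    apply fderiv_of_notMem_tsupport
    intro hmem
    have := hR hmem
    rw [Metric.mem_closedBall, dist_zero_right] at this
    linarith
  have hΦ_le : ∀ t ∈ Set.Ioc (0:ℝ) 1, ∀ p, ‖Φ t p‖ ≤ bound p := by
    rintro t ht ⟨x, z⟩
    have hst : 0 < Real.sqrt t := Real.sqrt_pos.2 ht.1
    have hΦnn : 0 ≤ Φ t (x, z) := by rw [hΦ]; positivity
    rw [Real.norm_eq_abs, abs_of_nonneg hΦnn]
    by_cases hz : f (x + (2 * Real.sqrt t) • z) = 0 ∧ f x = 0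
    · have : Φ t (x, z) = 0 := by rw [hΦ]; simp [hz.1, hz.2]
      rw [this]; exact hbound_nonneg _
    · have hxb : ‖x‖ ≤ R + 2*‖z‖ := by
        rcases not_and_or.mp hz with h | h
        · have h1 : ‖x + (2 * Real.sqrt t) • z‖ ≤ R := by
            by_contra hc
            exact h (hfzero _ (not_le.mp hc))
          have h2 : ‖(2 * Real.sqrt t) • z‖ ≤ 2*‖z‖ := by
            rw [norm_smul, Real.norm_eq_abs, abs_of_pos (by positivity)]
            have hs1 : Real.sqrt t ≤ 1 := by
              rw [show (1:ℝ) = Real.sqrt 1 by rw [Real.sqrt_one]]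
              exact Real.sqrt_le_sqrt ht.2
            nlinarith [norm_nonneg z]
          calc ‖x‖ = ‖(x + (2 * Real.sqrt t) • z) - (2 * Real.sqrt t) • z‖ := by
                rw [add_sub_cancel_right]
            _ ≤ ‖x + (2 * Real.sqrt t) • z‖ + ‖(2 * Real.sqrt t) • z‖ := norm_sub_le _ _
            _ ≤ R + 2*‖z‖ := add_le_add h1 h2
        · have h1 : ‖x‖ ≤ R := by
            by_contra hc
            exact h (hfzero x (not_le.mp hc))
          have := norm_nonneg z
          linarith
      have hlipb : |f (x + (2 * Real.sqrt t) • z) - f x| ≤ C * (2 * Real.sqrt t * ‖z‖) := by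
        have hd := hLip.dist_le_mul (x + (2 * Real.sqrt t) • z) x
        rw [Real.dist_eq] at hd
        refine hd.trans (le_of_eq ?_)
        rw [dist_eq_norm, add_sub_cancel_left, norm_smul, Real.norm_eq_abs,
          abs_of_pos (by positivity : (0:ℝ) < 2 * Real.sqrt t)]
      have hdivle : |f (x + (2 * Real.sqrt t) • z) - f x| / Real.sqrt t ≤ 2*C*‖z‖ := by
        rw [div_le_iff₀ hst]
        refine hlipb.trans (le_of_eq ?_)
        ring
      have hmain : Φ t (x, z) ≤ Real.pi ^ (-(n:ℝ)/2) * Real.exp (-‖z‖^2) * (2*C*‖z‖) := by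
        rw [hΦ]
        exact mul_le_mul_of_nonneg_left hdivle (by positivity)
      exact hmain.trans (hkey x z hxb)
  have hΦ_meas : ∀ t : ℝ, AEStronglyMeasurable (Φ t) (volume.prod volume) := by
    intro t
    apply Continuous.aestronglyMeasurable
    rw [hΦ]
    have h1 : Continuous fun p : EuclideanSpace ℝ (Fin n) × EuclideanSpace ℝ (Fin n) =>
        f (p.1 + (2 * Real.sqrt t) • p.2) :=
      hfc.comp (continuous_fst.add (continuous_snd.const_smul (2 * Real.sqrt t)))
    exact (continuous_const.mul (Real.continuous_exp.comp
      (((continuous_norm.comp continuous_snd).pow 2).neg))).mul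
      (((h1.sub (hfc.comp continuous_fst)).abs).div_const _)
  have hΦ_int : ∀ t ∈ Set.Ioc (0:ℝ) 1, Integrable (Φ t) (volume.prod volume) := fun t ht =>
    hbound_int.mono' (hΦ_meas t) (Filter.Eventually.of_forall (hΦ_le t ht))
  have hlim : ∀ᵐ p ∂((volume : Measure (EuclideanSpace ℝ (Fin n))).prod volume),
      Tendsto (fun t => Φ t p) l (nhds (L p)) := by
    have hd : ∀ᵐ x ∂(volume : Measure (EuclideanSpace ℝ (Fin n))),
        DifferentiableAt ℝ f x := hLip.ae_differentiableAt
    have hprod := (MeasureTheory.Measure.quasiMeasurePreserving_fst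
      (μ := (volume : Measure (EuclideanSpace ℝ (Fin n))))
      (ν := (volume : Measure (EuclideanSpace ℝ (Fin n))))).ae hd
    filter_upwards [hprod] with p hp
    exact Tendsto.const_mul _ (limit_pt hp p.2)
  have hDCT := MeasureTheory.tendsto_integral_filter_of_dominated_convergence
    (μ := (volume : Measure (EuclideanSpace ℝ (Fin n))).prod volume)
    (F := Φ) (f := L) (l := l) bound
    (Filter.Eventually.of_forall fun t => hΦ_meas t)
    (by
      filter_upwards [Ioc_mem_nhdsGT zero_lt_one] with t ht
      exact Filter.Eventually.of_forall (hΦ_le t ht))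
    hbound_int hlim
  have hL_meas : AEStronglyMeasurable L (volume.prod volume) := by
    have m1 : Measurable fun p : EuclideanSpace ℝ (Fin n) × EuclideanSpace ℝ (Fin n) =>
        (fderiv ℝ f p.1, p.2) :=
      ((measurable_fderiv ℝ f).comp measurable_fst).prodMk measurable_snd
    have m2 : Continuous fun q : (EuclideanSpace ℝ (Fin n) →L[ℝ] ℝ) × EuclideanSpace ℝ (Fin n) =>
        q.1 q.2 := isBoundedBilinearMap_apply.continuous
    have m3 : Measurable fun p : EuclideanSpace ℝ (Fin n) × EuclideanSpace ℝ (Fin n) =>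
        fderiv ℝ f p.1 p.2 := m2.measurable.comp m1
    rw [hLdef]
    apply Measurable.aestronglyMeasurable
    exact (measurable_const.mul ((measurable_norm.comp measurable_snd).pow_const 2).neg.exp).mul
      (measurable_const.mul m3.abs)
  have hLle : ∀ p, ‖L p‖ ≤ bound p := by
    rintro ⟨x, z⟩
    have hLnn : 0 ≤ L (x, z) := by rw [hLdef]; positivity
    rw [Real.norm_eq_abs, abs_of_nonneg hLnn]
    by_cases hxR : R < ‖x‖
    · have : L (x, z) = 0 := by rw [hLdef]; simp [hDfzero x hxR]
      rw [this]; exact hbound_nonneg _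
    · push_neg at hxR
      have h1 : |fderiv ℝ f x z| ≤ C * ‖z‖ := by
        calc |fderiv ℝ f x z| = ‖fderiv ℝ f x z‖ := (Real.norm_eq_abs _).symm
          _ ≤ ‖fderiv ℝ f x‖ * ‖z‖ := ContinuousLinearMap.le_opNorm _ _
          _ ≤ C * ‖z‖ := mul_le_mul_of_nonneg_right (hDf x) (norm_nonneg z)
      have h2 : L (x, z) ≤ Real.pi ^ (-(n:ℝ)/2) * Real.exp (-‖z‖^2) * (2*C*‖z‖) := by
        rw [hLdef]
        apply mul_le_mul_of_nonneg_left _ (by positivity)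
        · linarith
      exact h2.trans (hkey x z (by linarith [norm_nonneg z]))
  have hL_int : Integrable L (volume.prod volume) :=
    hbound_int.mono' hL_meas (Filter.Eventually.of_forall hLle)
  have harith : Real.pi ^ (-(n:ℝ)/2) * 2 * Real.sqrt Real.pi ^ (n-1) = 2 / Real.sqrt Real.pi := by
    have h1 : Real.sqrt Real.pi ^ (n-1) = Real.pi ^ (((n:ℝ)-1)/2) := by
      rw [Real.sqrt_eq_rpow, ← Real.rpow_natCast (Real.pi ^ ((1:ℝ)/2)) (n-1),
        ← Real.rpow_mul Real.pi_pos.le]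
      congr 1
      rw [Nat.cast_sub hn]
      ring
    rw [h1, Real.sqrt_eq_rpow]
    rw [show Real.pi ^ (-(n:ℝ)/2) * 2 * Real.pi ^ (((n:ℝ)-1)/2)
        = 2 * (Real.pi ^ (-(n:ℝ)/2) * Real.pi ^ (((n:ℝ)-1)/2)) by ring,
      ← Real.rpow_add Real.pi_pos, show -(n:ℝ)/2 + ((n:ℝ)-1)/2 = -(1/2) by ring,
      Real.rpow_neg Real.pi_pos.le]
    ring
  have hLval : ∫ p, L p ∂((volume : Measure (EuclideanSpace ℝ (Fin n))).prod volume)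
      = (2 / Real.sqrt Real.pi) * ∫ x, ‖fderiv ℝ f x‖ := by
    rw [MeasureTheory.integral_prod _ hL_int]
    have hx : ∀ x : EuclideanSpace ℝ (Fin n),
        (∫ z, L (x, z)) = (2 / Real.sqrt Real.pi) * ‖fderiv ℝ f x‖ := by
      intro x
      have h0 : (fun z : EuclideanSpace ℝ (Fin n) => L (x, z))
          = fun z => (Real.pi ^ (-(n:ℝ)/2) * 2) * (Real.exp (-‖z‖^2) * |fderiv ℝ f x z|) := by
        funext z; rw [hLdef]; ring
      rw [h0, MeasureTheory.integral_const_mul, gaussE_dual hn (fderiv ℝ f x)]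
      rw [show Real.pi ^ (-(n:ℝ)/2) * 2 * (‖fderiv ℝ f x‖ * Real.sqrt Real.pi ^ (n-1))
          = (Real.pi ^ (-(n:ℝ)/2) * 2 * Real.sqrt Real.pi ^ (n-1)) * ‖fderiv ℝ f x‖ by ring,
        harith]
    rw [show (fun x : EuclideanSpace ℝ (Fin n) => ∫ z, L (x, z))
        = fun x => (2 / Real.sqrt Real.pi) * ‖fderiv ℝ f x‖ from funext hx,
      MeasureTheory.integral_const_mul]
  have hev : (fun t : ℝ => ∫ p, Φ t p ∂((volume : Measure (EuclideanSpace ℝ (Fin n))).prod volume))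
      =ᶠ[l] (fun t : ℝ => t ^ (-(1 : ℝ) / 2) * ∫ x, ∫ y, heatKernel n t x y * |f x - f y|) := by
    filter_upwards [Ioc_mem_nhdsGT zero_lt_one] with t ht
    have h1 : t ^ (-(1:ℝ)/2) * ∫ x, ∫ y, heatKernel n t x y * |f x - f y|
        = ∫ x, ∫ z, Φ t (x, z) := by
      rw [← MeasureTheory.integral_const_mul]
      apply integral_congr_ae
      apply Filter.Eventually.of_forall
      intro x
      simp only [hΦ]
      exact inner_cov f ht.1 x
    rw [h1, ← MeasureTheory.integral_prod (fun p => Φ t p) (hΦ_int t ht)]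
  rw [← hLval]
  exact hDCT.congr' hev
end

section
/- Let n ≥ 1, t > 0, and let H = {z ∈ ℝⁿ : zₙ > 0} be the open upper half-space. Then the function u : ℝⁿ → ℝ defined by u(x) = ∫_H (4πt)^(−n/2) exp(−‖x−z‖²/(4t)) dz is differentiable at every x ∈ ℝⁿ with gradient ∇u(x) = (4πt)^(−1/2) exp(−xₙ²/(4t)) · eₙ, where eₙ is the n-th standard basis vector and xₙ is the n-th coordinate of x; in particular ‖∇u(x)‖ = (4πt)^(−1/2) exp(−xₙ²/(4t)). -/
open MeasureTheory Real Filter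

private theorem key_eq' (n : ℕ) (t : ℝ) (ht : 0 < t) (i₀ : Fin n)
    (x : EuclideanSpace ℝ (Fin n)) :
    (∫ z in {z : EuclideanSpace ℝ (Fin n) | 0 < z i₀},
        (4 * π * t) ^ (-(n : ℝ) / 2) * Real.exp (-‖x - z‖ ^ 2 / (4 * t)))
      = (4 * π * t) ^ (-(1:ℝ)/2) * ∫ w in Set.Iio (x i₀), Real.exp (-w ^ 2 / (4 * t)) := by
  have h4t : (0:ℝ) < 4 * π * t := by positivity
  set c : ℝ := (4 * π * t) ^ (-(1:ℝ)/2) with hc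
  have hcpos : 0 < c := Real.rpow_pos_of_pos h4t _
  -- c^n = (4πt)^(-n/2)
  have hcn : (4 * π * t) ^ (-(n : ℝ) / 2) = c ^ n := by
    rw [hc, ← Real.rpow_natCast ((4 * π * t) ^ (-(1:ℝ)/2)) n, ← Real.rpow_mul h4t.le]
    congr 1; ring
  -- measurability of the half space
  have hS : MeasurableSet {z : EuclideanSpace ℝ (Fin n) | 0 < z i₀} :=
    (isOpen_lt continuous_const (EuclideanSpace.proj (𝕜 := ℝ) i₀).continuous).measurableSet
  rw [← integral_indicator hS]
  have hMP := (EuclideanSpace.volume_preserving_symm_measurableEquiv_toLp (Fin n)).symm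
  rw [← hMP.integral_comp (MeasurableEquiv.measurableEmbedding _), MeasurableEquiv.symm_symm]
  -- define factors
  classical
  set f : Fin n → ℝ → ℝ := fun i w =>
    if i = i₀ then
      Set.indicator (Set.Ioi 0) (fun w => c * Real.exp (-(x i₀ - w)^2/(4*t))) w
    else c * Real.exp (-(x i - w)^2/(4*t)) with hf
  have hpt : ∀ y : Fin n → ℝ,
      (Set.indicator {z : EuclideanSpace ℝ (Fin n) | 0 < z i₀}
        (fun z => (4 * π * t) ^ (-(n : ℝ) / 2) * Real.exp (-‖x - z‖ ^ 2 / (4 * t)))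
        ((MeasurableEquiv.toLp 2 (Fin n → ℝ)) y))
      = ∏ i, f i (y i) := by
    intro y
    have hmem : ((MeasurableEquiv.toLp 2 (Fin n → ℝ)) y)
        ∈ {z : EuclideanSpace ℝ (Fin n) | 0 < z i₀} ↔ 0 < y i₀ := Iff.rfl
    have hnorm : ‖x - (MeasurableEquiv.toLp 2 (Fin n → ℝ)) y‖ ^ 2
        = ∑ i, (x i - y i) ^ 2 := by
      rw [EuclideanSpace.norm_eq, Real.sq_sqrt (by positivity)]
      congr 1; funext i
      simp [sq_abs]
    by_cases h : 0 < y i₀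
    · rw [Set.indicator_of_mem (hmem.mpr h), hnorm]
      have : ∀ i, f i (y i) = c * Real.exp (-(x i - y i)^2/(4*t)) := by
        intro i
        by_cases hi : i = i₀
        · subst hi; simp [hf, Set.indicator_apply, Set.mem_Ioi, h]
        · simp only [hf, if_neg hi]
      simp_rw [this]
      rw [Finset.prod_mul_distrib, Finset.prod_const, ← Real.exp_sum, hcn]
      congr 2
      · simp
      rw [← Finset.sum_div, ← Finset.sum_neg_distrib]
    · rw [Set.indicator_of_notMem (fun hx => h (hmem.mp hx))]
      refine (Finset.prod_eq_zero (Finset.mem_univ i₀) ?_).symm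
      simp only [hf]
      simp [Set.indicator_apply, h]
  rw [MeasureTheory.integral_congr_ae (Filter.Eventually.of_forall hpt)]
  rw [MeasureTheory.integral_fintype_prod_volume_eq_prod f]
  -- compute factors
  have hint1 : ∀ a : ℝ, ∫ w : ℝ, Real.exp (-(a - w)^2/(4*t)) = (4 * π * t) ^ ((1:ℝ)/2) := by
    intro a
    rw [integral_sub_left_eq_self (fun v : ℝ => Real.exp (-v^2/(4*t))) volume a]
    have h : ∀ w : ℝ, -w^2/(4*t) = -(1/(4*t)) * w^2 := fun w => by ring
    simp_rw [h, integral_gaussian]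
    rw [Real.sqrt_eq_rpow]
    congr 1
    field_simp
  rw [Finset.prod_eq_single i₀ ?_ (by simp)]
  · -- the i₀ factor
    rw [hf]; simp only [eq_self_iff_true, if_true]
    rw [integral_indicator measurableSet_Ioi]
    have : ∫ w in Set.Ioi (0:ℝ), c * Real.exp (-(x i₀ - w)^2/(4*t))
        = c * ∫ w in Set.Ioi (0:ℝ), Real.exp (-(x i₀ - w)^2/(4*t)) := by
      rw [integral_const_mul]
    rw [this]
    congr 1
    -- translation for set integral
    rw [← integral_indicator measurableSet_Ioi, ← integral_indicator measurableSet_Iio,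
      ← integral_sub_left_eq_self (Set.indicator (Set.Iio (x i₀))
        (fun v => Real.exp (-v^2/(4*t)))) volume (x i₀)]
    congr 1; funext w
    by_cases h : 0 < w
    · simp [Set.indicator_apply, h]
    · simp [Set.indicator_apply, h, not_lt.mp h]
  · intro i _ hi
    rw [hf]; simp only [if_neg hi]
    rw [integral_const_mul, hint1 (x i), hc, ← Real.rpow_add h4t]
    norm_num

private theorem toDual_single (n : ℕ) (i₀ : Fin n) (coef : ℝ) :
    (InnerProductSpace.toDual ℝ (EuclideanSpace ℝ (Fin n)))
        (coef • EuclideanSpace.single i₀ (1:ℝ)) = coef • EuclideanSpace.proj (𝕜 := ℝ) i₀ := by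
  apply ContinuousLinearMap.ext
  intro y
  rw [InnerProductSpace.toDual_apply_apply, real_inner_smul_left,
    EuclideanSpace.inner_single_left]
  simp [mul_comm]

private theorem hasDeriv_G' (t : ℝ) (ht : 0 < t) (s : ℝ) :
    HasDerivAt (fun s : ℝ => ∫ w in Set.Iio s, Real.exp (-w ^ 2 / (4 * t)))
      (Real.exp (-s ^ 2 / (4 * t))) s := by
  have hint : Integrable (fun w : ℝ => Real.exp (-w ^ 2 / (4 * t))) := by
    have h : (fun w : ℝ => Real.exp (-w ^ 2 / (4 * t)))
        = fun w => Real.exp (-(1/(4*t)) * w ^ 2) := by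
      funext w; congr 1; ring
    rw [h]; exact integrable_exp_neg_mul_sq (by positivity)
  have hcont : Continuous (fun w : ℝ => Real.exp (-w ^ 2 / (4 * t))) := by continuity
  have heq : (fun s : ℝ => ∫ w in Set.Iio s, Real.exp (-w ^ 2 / (4 * t)))
      = fun s => (∫ w in Set.Iic (0:ℝ), Real.exp (-w ^ 2 / (4 * t)))
          + ∫ w in (0:ℝ)..s, Real.exp (-w ^ 2 / (4 * t)) := by
    funext s
    rw [← integral_Iic_eq_integral_Iio,
      ← intervalIntegral.integral_Iic_sub_Iic hint.integrableOn hint.integrableOn]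
    ring
  rw [heq]
  exact (intervalIntegral.integral_hasDerivAt_right hint.intervalIntegrable
    (hcont.stronglyMeasurableAtFilter _ _) hcont.continuousAt).const_add _

/-- Explicit gradient of the heat semigroup applied to the characteristic function of the
upper half-space `H = {z : zₙ > 0}` in `ℝⁿ`. -/
theorem stmt_12 (n : ℕ) (hn : 1 ≤ n) (t : ℝ) (ht : 0 < t) :
    ∀ x : EuclideanSpace ℝ (Fin n),
      HasGradientAt
        (fun x : EuclideanSpace ℝ (Fin n) =>
          ∫ z in {z : EuclideanSpace ℝ (Fin n) | 0 < z ⟨n - 1, by omega⟩},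
            (4 * Real.pi * t) ^ (-(n : ℝ) / 2) * Real.exp (-‖x - z‖ ^ 2 / (4 * t)))
        (((4 * Real.pi * t) ^ (-(1 : ℝ) / 2) *
            Real.exp (-(x ⟨n - 1, by omega⟩) ^ 2 / (4 * t))) •
          EuclideanSpace.single (⟨n - 1, by omega⟩ : Fin n) (1 : ℝ)) x ∧
      ‖(((4 * Real.pi * t) ^ (-(1 : ℝ) / 2) *
            Real.exp (-(x ⟨n - 1, by omega⟩) ^ 2 / (4 * t))) •
          EuclideanSpace.single (⟨n - 1, by omega⟩ : Fin n) (1 : ℝ))‖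
        = (4 * Real.pi * t) ^ (-(1 : ℝ) / 2) *
            Real.exp (-(x ⟨n - 1, by omega⟩) ^ 2 / (4 * t)) := by
  intro x
  have h4t : (0:ℝ) < 4 * π * t := by positivity
  set i₀ : Fin n := ⟨n - 1, by omega⟩ with hi₀
  set c : ℝ := (4 * π * t) ^ (-(1:ℝ)/2) with hc
  have hcpos : 0 < c := Real.rpow_pos_of_pos h4t _
  set coef : ℝ := c * Real.exp (-(x i₀) ^ 2 / (4 * t)) with hcoef
  have hcoefpos : 0 < coef := mul_pos hcpos (Real.exp_pos _)
  constructor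
  · -- gradient
    have hfun : (fun x : EuclideanSpace ℝ (Fin n) =>
        ∫ z in {z : EuclideanSpace ℝ (Fin n) | 0 < z i₀},
          (4 * π * t) ^ (-(n : ℝ) / 2) * Real.exp (-‖x - z‖ ^ 2 / (4 * t)))
        = fun x => c * ∫ w in Set.Iio (x i₀), Real.exp (-w ^ 2 / (4 * t)) :=
      funext fun x => key_eq' n t ht i₀ x
    rw [hasGradientAt_iff_hasFDerivAt, hfun]
    have hG : HasDerivAt (fun s : ℝ => c * ∫ w in Set.Iio s, Real.exp (-w ^ 2 / (4 * t)))
        coef (x i₀) := (hasDeriv_G' t ht (x i₀)).const_mul c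
    have hproj : HasFDerivAt (fun z : EuclideanSpace ℝ (Fin n) => z i₀)
        (EuclideanSpace.proj (𝕜 := ℝ) i₀) x := (EuclideanSpace.proj (𝕜 := ℝ) i₀).hasFDerivAt
    have hcomp := hG.comp_hasFDerivAt x hproj
    rw [toDual_single n i₀ coef]
    exact hcomp
  · rw [norm_smul, EuclideanSpace.norm_single]
    simp [abs_of_pos hcoefpos, Real.norm_eq_abs]
end

section
/- Let n ≥ 1, p ∈ (1, ∞), L ≥ 0, and let K ⊆ ℝⁿ be measurable with finite Lebesgue measure λ(K). Let f : ℝⁿ → ℝ be Lipschitz with constant L and satisfy f(x) = 0 for all x ∉ K. Then for every t > 0, t^(−p/2) ∬_{ℝⁿ×ℝⁿ} p_t(x,y) |f(x) − f(y)|^p dx dy ≤ 2^(p+1) · L^p · λ(K) · Γ((n+p)/2) / Γ(n/2), where Γ is Euler's gamma function. -/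
open MeasureTheory Real Filter
open scoped ENNReal



private lemma rpow_le_exp_aux {q r : ℝ} (hq : 0 ≤ q) (hr : 0 ≤ r) :
    r ^ q ≤ Real.exp (q * r) := by
  rcases hr.eq_or_lt with h | h
  · rcases eq_or_ne q 0 with hq0 | hq0
    · simp [hq0]
    · rw [← h, Real.zero_rpow hq0]; positivity
  · rw [Real.rpow_def_of_pos h]
    apply Real.exp_le_exp.2
    have hlog : Real.log r ≤ r := (Real.log_le_sub_one_of_pos h).trans (by linarith)
    calc Real.log r * q ≤ r * q := mul_le_mul_of_nonneg_right hlog hq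
      _ = q * r := mul_comm _ _

private lemma integrable_gauss_aux (n : ℕ) {b q : ℝ} (hb : 0 < b) (hq : 0 ≤ q) :
    Integrable (fun z : EuclideanSpace ℝ (Fin n) => ‖z‖ ^ q * Real.exp (-b * ‖z‖ ^ 2)) := by
  have hgauss : Integrable (fun z : EuclideanSpace ℝ (Fin n) => Real.exp (-(b/2) * ‖z‖ ^ 2)) := by
    have h := (GaussianFourier.integrable_cexp_neg_mul_sq_norm_add (V := EuclideanSpace ℝ (Fin n))
      (b := ((b/2 : ℝ) : ℂ)) (by simpa using half_pos hb) 0 0).norm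
    refine h.congr (Filter.Eventually.of_forall fun z => ?_)
    simp [Complex.norm_exp, ← Complex.ofReal_pow]
  have hcont : Continuous (fun z : EuclideanSpace ℝ (Fin n) => ‖z‖ ^ q * Real.exp (-b * ‖z‖ ^ 2)) := by
    apply Continuous.mul
    · exact continuous_norm.rpow_const (fun z => Or.inr hq)
    · exact Real.continuous_exp.comp ((continuous_const.mul ((continuous_norm).pow 2)))
  refine (hgauss.const_mul (Real.exp (q^2/(2*b)))).mono' hcont.aestronglyMeasurable
    (Filter.Eventually.of_forall fun z => ?_)
  rw [Real.norm_eq_abs, abs_of_nonneg (by positivity)]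
  have h2b : (0:ℝ) < 2*b := by linarith
  have key : q*‖z‖ - b*‖z‖^2 ≤ q^2/(2*b) + (-(b/2) * ‖z‖^2) := by
    have h1 : q*‖z‖ - (b/2)*‖z‖^2 ≤ q^2/(2*b) := by
      rw [← sub_nonneg]
      have h2 : q^2/(2*b) - (q*‖z‖ - (b/2)*‖z‖^2) = (q - b*‖z‖)^2 / (2*b) := by
        field_simp; ring
      rw [h2]; positivity
    linarith
  calc ‖z‖^q * Real.exp (-b*‖z‖^2)
      ≤ Real.exp (q*‖z‖) * Real.exp (-b*‖z‖^2) :=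
        mul_le_mul_of_nonneg_right (rpow_le_exp_aux hq (norm_nonneg z)) (Real.exp_nonneg _)
    _ = Real.exp (q*‖z‖ - b*‖z‖^2) := by rw [← Real.exp_add]; ring_nf
    _ ≤ Real.exp (q^2/(2*b) + (-(b/2) * ‖z‖^2)) := Real.exp_le_exp.2 key
    _ = Real.exp (q^2/(2*b)) * Real.exp (-(b/2)*‖z‖^2) := Real.exp_add _ _


private lemma moment_aux (n : ℕ) (hn : 1 ≤ n) {b q : ℝ} (hb : 0 < b) (hq : 0 < q) :
    ∫ z : EuclideanSpace ℝ (Fin n), ‖z‖ ^ q * Real.exp (-b * ‖z‖ ^ 2)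
      = Real.sqrt π ^ n * (b ^ (-((n : ℝ) + q) / 2) * Real.Gamma (((n:ℝ) + q) / 2)
          / Real.Gamma ((n:ℝ) / 2)) := by
  haveI : Nonempty (Fin n) := ⟨⟨0, hn⟩⟩
  haveI : Nontrivial (EuclideanSpace ℝ (Fin n)) := by
    refine nontrivial_of_ne (EuclideanSpace.single ⟨0, hn⟩ (1:ℝ)) 0 ?_
    intro h
    have := congrArg (fun v : EuclideanSpace ℝ (Fin n) => v ⟨0, hn⟩) h
    simpa using this
  have hdim : Module.finrank ℝ (EuclideanSpace ℝ (Fin n)) = n := finrank_euclideanSpace_fin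
  rw [MeasureTheory.integral_fun_norm_addHaar (volume)
    (fun r : ℝ => r ^ q * Real.exp (-b * r ^ 2))]
  rw [hdim]
  have hrad : ∫ y in Set.Ioi (0:ℝ), y ^ (n - 1) • (y ^ q * Real.exp (-b * y ^ 2))
      = b ^ (-((n:ℝ) + q) / 2) * (1/2) * Real.Gamma (((n:ℝ) + q) / 2) := by
    have h1 : ∫ y in Set.Ioi (0:ℝ), y ^ (n - 1) • (y ^ q * Real.exp (-b * y ^ 2))
        = ∫ y in Set.Ioi (0:ℝ), y ^ (((n:ℝ) - 1) + q) * Real.exp (-b * y ^ (2:ℝ)) := by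
      refine setIntegral_congr_fun measurableSet_Ioi (fun y hy => ?_)
      have hy' : (0:ℝ) < y := hy
      rw [smul_eq_mul, ← Real.rpow_natCast y (n - 1), Nat.cast_sub hn, Nat.cast_one,
        Real.rpow_add hy', show ((2:ℝ)) = ((2:ℕ):ℝ) by norm_num, Real.rpow_natCast]
      ring
    rw [h1, integral_rpow_mul_exp_neg_mul_rpow two_pos (by
      have : (1:ℝ) ≤ (n:ℝ) := by exact_mod_cast hn
      linarith) hb]
    rw [show ((n:ℝ) - 1 + q + 1) = (n:ℝ) + q by ring]
  rw [hrad]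
  have hball : (volume (Metric.ball (0 : EuclideanSpace ℝ (Fin n)) 1)).toReal
      = Real.sqrt π ^ n / Real.Gamma ((n:ℝ)/2 + 1) := by
    rw [EuclideanSpace.volume_ball, Fintype.card_fin]
    simp only [ENNReal.ofReal_one, one_pow, one_mul]
    rw [ENNReal.toReal_ofReal]
    positivity
  rw [measureReal_def, hball, nsmul_eq_mul, smul_eq_mul]
  have hG1 : Real.Gamma ((n:ℝ)/2 + 1) = ((n:ℝ)/2) * Real.Gamma ((n:ℝ)/2) := by
    rw [Real.Gamma_add_one]
    positivity
  have hGpos : 0 < Real.Gamma ((n:ℝ)/2) := Real.Gamma_pos_of_pos (by positivity)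
  have hnpos : (0:ℝ) < n := by exact_mod_cast hn
  rw [hG1]
  field_simp

/-- Uniform bound on the rescaled heat-kernel `p`-energy of a compactly vanishing
Lipschitz function. -/
theorem stmt_17 (n : ℕ) (hn : 1 ≤ n) (p : ℝ) (hp : 1 < p) (L : ℝ) (hL : 0 ≤ L)
    (K : Set (EuclideanSpace ℝ (Fin n))) (hK : MeasurableSet K) (hKfin : volume K < ⊤)
    (f : EuclideanSpace ℝ (Fin n) → ℝ) (hf : LipschitzWith L.toNNReal f)
    (hf0 : ∀ x ∉ K, f x = 0) :
    ∀ t > (0 : ℝ),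
      t ^ (-(p / 2)) * ∫ x, ∫ y, heatKernel n t x y * |f x - f y| ^ p
        ≤ 2 ^ (p + 1) * L ^ p * (volume K).toReal *
            Real.Gamma (((n : ℝ) + p) / 2) / Real.Gamma ((n : ℝ) / 2) := by
  intro t ht
  have hp0 : (0:ℝ) < p := lt_trans one_pos hp
  have h4t : (0:ℝ) < 4 * t := by linarith
  set b : ℝ := (4 * t)⁻¹ with hbdef
  have hb : 0 < b := by positivity
  set c : ℝ := (4 * Real.pi * t) ^ (-(n : ℝ) / 2) with hcdef
  have hc : 0 < c := Real.rpow_pos_of_pos (by positivity) _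
  have hk_eq : ∀ x y : EuclideanSpace ℝ (Fin n),
      heatKernel n t x y = c * Real.exp (-b * ‖x - y‖ ^ 2) := by
    intro x y
    unfold heatKernel
    rw [hcdef, hbdef]
    congr 1
    rw [neg_div, div_eq_inv_mul, neg_mul]
  set F : EuclideanSpace ℝ (Fin n) → EuclideanSpace ℝ (Fin n) → ℝ :=
    fun x y => heatKernel n t x y * |f x - f y| ^ p with hFdef
  set G : EuclideanSpace ℝ (Fin n) → ℝ :=
    fun z => c * Real.exp (-b * ‖z‖ ^ 2) * (L ^ p * ‖z‖ ^ p) with hGdef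
  have hGnn : ∀ z, 0 ≤ G z := by
    intro z
    have h1 : (0:ℝ) ≤ L ^ p := Real.rpow_nonneg hL p
    have h2 : (0:ℝ) ≤ ‖z‖ ^ p := Real.rpow_nonneg (norm_nonneg z) p
    positivity
  have hGcont : Continuous G := by
    apply Continuous.mul
    · exact continuous_const.mul (Real.continuous_exp.comp (continuous_const.mul
        (continuous_norm.pow 2)))
    · exact continuous_const.mul (continuous_norm.rpow_const (fun z => Or.inr hp0.le))
  have hGint : Integrable G := by
    have h := ((integrable_gauss_aux n hb hp0.le).const_mul (c * L ^ p))
    refine h.congr (Filter.Eventually.of_forall fun z => ?_)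
    simp only [hGdef]
    ring
  have hMnn : 0 ≤ ∫ z, G z := integral_nonneg hGnn
  set Mval : ℝ := ∫ z, G z with hMdef
  -- continuity/measurability of F
  have hfc : Continuous f := hf.continuous
  have hFcont : Continuous (fun z : EuclideanSpace ℝ (Fin n) × EuclideanSpace ℝ (Fin n) =>
      F z.1 z.2) := by
    apply Continuous.mul
    · unfold heatKernel
      exact continuous_const.mul (Real.continuous_exp.comp
        ((((continuous_fst.sub continuous_snd).norm.pow 2).neg).div_const _))
    · exact Continuous.rpow_const
        (((hfc.comp continuous_fst).sub (hfc.comp continuous_snd)).abs)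
        (fun _ => Or.inr hp0.le)
  have hFnn : ∀ x y, 0 ≤ F x y := by
    intro x y
    simp only [hFdef]
    apply mul_nonneg
    · rw [hk_eq]; positivity
    · exact Real.rpow_nonneg (abs_nonneg _) p
  -- the ENNReal versions
  set ge : EuclideanSpace ℝ (Fin n) → ℝ≥0∞ := fun z => ENNReal.ofReal (G z) with hgedef
  have hgem : Measurable ge := hGcont.measurable.ennreal_ofReal
  set ind : EuclideanSpace ℝ (Fin n) → ℝ≥0∞ := K.indicator 1 with hinddef
  have hindm : Measurable ind := (measurable_const.indicator hK)
  -- pointwise bound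
  have hpoint : ∀ x y, ENNReal.ofReal (F x y) ≤ ge (x - y) * (ind x + ind y) := by
    intro x y
    by_cases hxy : x ∈ K ∨ y ∈ K
    · have h1 : ENNReal.ofReal (F x y) ≤ ge (x - y) := by
        apply ENNReal.ofReal_le_ofReal
        simp only [hFdef, hGdef]
        rw [hk_eq]
        apply mul_le_mul_of_nonneg_left _ (by positivity)
        have hdist : |f x - f y| ≤ L * ‖x - y‖ := by
          have h := hf.dist_le_mul x y
          rw [Real.dist_eq, dist_eq_norm] at h
          calc |f x - f y| ≤ (L.toNNReal : ℝ) * ‖x - y‖ := h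
            _ = L * ‖x - y‖ := by rw [Real.coe_toNNReal L hL]
        calc |f x - f y| ^ p ≤ (L * ‖x - y‖) ^ p :=
              Real.rpow_le_rpow (abs_nonneg _) hdist hp0.le
          _ = L ^ p * ‖x - y‖ ^ p := Real.mul_rpow hL (norm_nonneg _)
      have h2 : (1:ℝ≥0∞) ≤ ind x + ind y := by
        rcases hxy with hx | hy
        · calc (1:ℝ≥0∞) = ind x := by simp [hinddef, Set.indicator_of_mem hx]
            _ ≤ ind x + ind y := le_self_add
        · calc (1:ℝ≥0∞) = ind y := by simp [hinddef, Set.indicator_of_mem hy]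
            _ ≤ ind x + ind y := le_add_self
      calc ENNReal.ofReal (F x y) ≤ ge (x - y) := h1
        _ = ge (x - y) * 1 := (mul_one _).symm
        _ ≤ ge (x - y) * (ind x + ind y) := by gcongr
    · push_neg at hxy
      have hF0 : F x y = 0 := by
        simp only [hFdef]
        rw [hf0 x hxy.1, hf0 y hxy.2]
        simp [Real.zero_rpow (ne_of_gt hp0)]
      rw [hF0]
      simp
  -- the double lintegral
  set A : ℝ≥0∞ := ∫⁻ x, ∫⁻ y, ENNReal.ofReal (F x y) with hAdef
  set Me : ℝ≥0∞ := ∫⁻ z, ge z with hMedef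
  have hMe : Me = ENNReal.ofReal Mval := by
    rw [hMedef, hMdef, MeasureTheory.ofReal_integral_eq_lintegral_ofReal hGint
      (Filter.Eventually.of_forall hGnn)]
  have hMsub_left : ∀ x : EuclideanSpace ℝ (Fin n), ∫⁻ y, ge (x - y) = Me := by
    intro x
    exact (Measure.measurePreserving_sub_left volume x).lintegral_comp hgem
  have hMsub_right : ∀ y : EuclideanSpace ℝ (Fin n), ∫⁻ x, ge (x - y) = Me := by
    intro y
    exact lintegral_sub_right_eq_self ge y
  have hA2 : A ≤ volume K * Me + Me * volume K := by
    have step : A ≤ ∫⁻ x, ∫⁻ y, (ge (x - y) * ind x + ge (x - y) * ind y) := by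
      refine lintegral_mono fun x => lintegral_mono fun y => ?_
      calc ENNReal.ofReal (F x y) ≤ ge (x - y) * (ind x + ind y) := hpoint x y
        _ = ge (x - y) * ind x + ge (x - y) * ind y := mul_add _ _ _
    refine step.trans (le_of_eq ?_)
    have hmeas1 : ∀ x : EuclideanSpace ℝ (Fin n),
        Measurable fun y => ge (x - y) * ind x :=
      fun x => ((hgem.comp (measurable_const.sub measurable_id)).mul_const _)
    have hinner : ∀ x : EuclideanSpace ℝ (Fin n),
        (∫⁻ y, (ge (x - y) * ind x + ge (x - y) * ind y))
          = ind x * Me + ∫⁻ y, ge (x - y) * ind y := by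
      intro x
      have hm2 : Measurable fun y : EuclideanSpace ℝ (Fin n) => ge (x - y) :=
        hgem.comp (measurable_const.sub measurable_id)
      rw [lintegral_add_left (hmeas1 x)]
      congr 1
      rw [lintegral_mul_const _ hm2, hMsub_left x, mul_comm]
    calc (∫⁻ x, ∫⁻ y, (ge (x - y) * ind x + ge (x - y) * ind y))
        = ∫⁻ x, (ind x * Me + ∫⁻ y, ge (x - y) * ind y) := lintegral_congr hinner
      _ = (∫⁻ x, ind x * Me) + ∫⁻ x, ∫⁻ y, ge (x - y) * ind y := by
          apply lintegral_add_left (hindm.mul_const _)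
      _ = volume K * Me + Me * volume K := by
          congr 1
          · rw [lintegral_mul_const _ hindm, lintegral_indicator_one hK]
          · rw [lintegral_lintegral_swap]
            · have : ∀ y : EuclideanSpace ℝ (Fin n),
                  (∫⁻ x, ge (x - y) * ind y) = Me * ind y := by
                intro y
                have hm3 : Measurable fun x : EuclideanSpace ℝ (Fin n) => ge (x - y) :=
                  hgem.comp (measurable_id.sub measurable_const)
                rw [lintegral_mul_const _ hm3, hMsub_right y]
              rw [lintegral_congr this]
              rw [lintegral_const_mul _ hindm, lintegral_indicator_one hK]
            · exact ((hgem.comp (measurable_fst.sub measurable_snd)).mul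
                (hindm.comp measurable_snd)).aemeasurable
  set κr : ℝ := (volume K).toReal with hκdef
  have hκnn : 0 ≤ κr := ENNReal.toReal_nonneg
  have hκ : volume K = ENNReal.ofReal κr := (ENNReal.ofReal_toReal hKfin.ne).symm
  have hA3 : A ≤ ENNReal.ofReal (2 * Mval * κr) := by
    refine hA2.trans ?_
    rw [hMe, hκ]
    rw [← ENNReal.ofReal_mul hκnn, ← ENNReal.ofReal_mul hMnn, ← ENNReal.ofReal_add
      (by positivity) (by positivity)]
    apply ENNReal.ofReal_le_ofReal
    nlinarith [hMnn, hκnn]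
  have hAtop : A ≠ ⊤ := ne_top_of_le_ne_top ENNReal.ofReal_ne_top hA3
  -- Bochner integral bounded by A.toReal
  have hFmeasP : Measurable fun z : EuclideanSpace ℝ (Fin n) × EuclideanSpace ℝ (Fin n) =>
      ENNReal.ofReal (F z.1 z.2) := hFcont.measurable.ennreal_ofReal
  have hinteq : ∀ x, ∫ y, F x y = (∫⁻ y, ENNReal.ofReal (F x y)).toReal := by
    intro x
    apply integral_eq_lintegral_of_nonneg_ae (Filter.Eventually.of_forall (hFnn x))
    exact (hFcont.comp (continuous_const.prodMk continuous_id)).aestronglyMeasurable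
  have hImeas : Measurable fun x => ∫⁻ y, ENNReal.ofReal (F x y) :=
    Measurable.lintegral_prod_right hFmeasP
  have step1 : (∫ x, ∫ y, F x y) ≤ A.toReal := by
    have h2 : (∫ x, ∫ y, F x y)
        = (∫⁻ x, ENNReal.ofReal ((∫⁻ y, ENNReal.ofReal (F x y)).toReal)).toReal := by
      rw [integral_congr_ae (Filter.Eventually.of_forall hinteq)]
      apply integral_eq_lintegral_of_nonneg_ae
        (Filter.Eventually.of_forall fun x => ENNReal.toReal_nonneg)
      exact (hImeas.ennreal_toReal).aestronglyMeasurable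
    rw [h2]
    apply ENNReal.toReal_mono hAtop
    exact lintegral_mono fun x => ENNReal.ofReal_toReal_le
  have step2 : A.toReal ≤ 2 * Mval * κr := by
    have h := ENNReal.toReal_mono ENNReal.ofReal_ne_top hA3
    rwa [ENNReal.toReal_ofReal (by positivity)] at h
  -- compute Mval
  have hMval : Mval = c * L ^ p * (Real.sqrt π ^ n *
      (b ^ (-((n:ℝ) + p) / 2) * Real.Gamma (((n:ℝ) + p) / 2) / Real.Gamma ((n:ℝ) / 2))) := by
    calc Mval = ∫ z, (c * L ^ p) * (‖z‖ ^ p * Real.exp (-b * ‖z‖ ^ 2)) := by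
          refine integral_congr_ae (Filter.Eventually.of_forall fun z => ?_)
          simp only [hGdef]
          ring
      _ = (c * L ^ p) * ∫ z, ‖z‖ ^ p * Real.exp (-b * ‖z‖ ^ 2) := integral_const_mul _ _
      _ = _ := by
          congr 1
          exact moment_aux n hn hb hp0
  -- final algebra
  have hbinv : ((4*t)⁻¹ : ℝ) ^ (-((n:ℝ)+p)/2) = (4*t) ^ (((n:ℝ)+p)/2) := by
    rw [Real.inv_rpow h4t.le, ← Real.rpow_neg h4t.le]
    congr 1; ring
  have hsplit : ((4*Real.pi*t) : ℝ) ^ (-(n:ℝ)/2) = (4*t) ^ (-(n:ℝ)/2) * π ^ (-(n:ℝ)/2) := by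
    rw [show (4*Real.pi*t : ℝ) = (4*t)*π by ring, Real.mul_rpow h4t.le Real.pi_pos.le]
  have hsqrt : Real.sqrt π ^ n = π ^ ((n:ℝ)/2) := by
    rw [Real.sqrt_eq_rpow, ← Real.rpow_natCast (π ^ ((1:ℝ)/2)) n, ← Real.rpow_mul Real.pi_pos.le]
    congr 1; push_cast; ring
  have hpi : π ^ (-(n:ℝ)/2) * π ^ ((n:ℝ)/2) = 1 := by
    rw [← Real.rpow_add Real.pi_pos, show -(n:ℝ)/2 + (n:ℝ)/2 = 0 by ring, Real.rpow_zero]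
  have h4a : (4*t:ℝ) ^ (-(n:ℝ)/2) * (4*t) ^ (((n:ℝ)+p)/2) = (4*t) ^ (p/2) := by
    rw [← Real.rpow_add h4t]; congr 1; ring
  have h4b : (4*t:ℝ) ^ (p/2) = 4 ^ (p/2) * t ^ (p/2) :=
    Real.mul_rpow (by norm_num) ht.le
  have ht2 : t ^ (-(p/2)) * t ^ (p/2) = 1 := by
    rw [← Real.rpow_add ht]; norm_num
  have h42 : (4:ℝ) = (2:ℝ) ^ (2:ℝ) := by
    have h := Real.rpow_natCast (2:ℝ) 2
    norm_num at h
    linarith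
  have h24 : (4:ℝ) ^ (p/2) = 2 ^ p := by
    rw [h42, ← Real.rpow_mul (by norm_num : (0:ℝ) ≤ 2)]
    congr 1; ring
  have h2p : (2:ℝ) * 2 ^ p = 2 ^ (p+1) := by
    rw [Real.rpow_add two_pos, Real.rpow_one]; ring
  have KEY : t ^ (-(p/2)) * (2 * (c * (Real.sqrt π ^ n * ((4*t)⁻¹ : ℝ) ^ (-((n:ℝ)+p)/2))))
      = 2 ^ (p+1) := by
    rw [hcdef]
    calc t ^ (-(p/2)) * (2 * ((4*Real.pi*t) ^ (-(n:ℝ)/2) *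
          (Real.sqrt π ^ n * ((4*t)⁻¹ : ℝ) ^ (-((n:ℝ)+p)/2))))
        = 2 * ((π ^ (-(n:ℝ)/2) * π ^ ((n:ℝ)/2)) *
            ((4*t:ℝ) ^ (-(n:ℝ)/2) * (4*t) ^ (((n:ℝ)+p)/2))) * t ^ (-(p/2)) := by
          rw [hbinv, hsplit, hsqrt]; ring
      _ = 2 * (4 ^ (p/2) * (t ^ (-(p/2)) * t ^ (p/2))) := by
          rw [hpi, h4a, h4b]; ring
      _ = 2 * 2 ^ p := by rw [ht2, h24]; ring
      _ = 2 ^ (p+1) := h2p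
  -- conclude
  have htp : (0:ℝ) ≤ t ^ (-(p/2)) := Real.rpow_nonneg ht.le _
  calc t ^ (-(p/2)) * ∫ x, ∫ y, F x y
      ≤ t ^ (-(p/2)) * (2 * Mval * κr) :=
        mul_le_mul_of_nonneg_left (step1.trans step2) htp
    _ = (t ^ (-(p/2)) * (2 * (c * (Real.sqrt π ^ n * b ^ (-((n:ℝ)+p)/2))))) *
          (L ^ p * κr * (Real.Gamma (((n:ℝ)+p)/2) / Real.Gamma ((n:ℝ)/2))) := by
        rw [hMval]; ring
    _ = 2 ^ (p+1) * (L ^ p * κr * (Real.Gamma (((n:ℝ)+p)/2) / Real.Gamma ((n:ℝ)/2))) := by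
        rw [hbdef] at *
        rw [KEY]
    _ = 2 ^ (p + 1) * L ^ p * κr * Real.Gamma (((n:ℝ) + p) / 2) / Real.Gamma ((n:ℝ) / 2) := by
        ring
end
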